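/- arXiv:2304.01176 — 4 statements merged into one kernel-verified Lean document; each statement's English description precedes it below -/
import Mathlib

section
/- Let A, B ⊆ ℝ be nonempty bounded measurable sets with |co(A)| ≥ |co(B)|. Then |A + B| ≥ |A| + |B| + min{|co(A) \ A|, |B|}. -/
open MeasureTheory Pointwise Set Filter
open scoped ENNReal NNReal Topology

namespace OneDimFreiman

variable {L : ℝ} [hLF : Fact (0 < L)]

lemma vol_singleton (x : AddCircle L) : volume ({x} : Set (AddCircle L)) = 0 := by
  have h := AddCircle.volume_closedBall (T := L) (x := x) 0
  simp only [Metric.closedBall_zero, mul_zero] at h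
  rw [h, min_eq_right (Fact.out : (0:ℝ) < L).le, ENNReal.ofReal_zero]

lemma vol_image_add (c : AddCircle L) {E : Set (AddCircle L)}
    (hE : NullMeasurableSet E volume) :
    volume ((fun x => x + c) '' E) = volume E := by
  have h : (fun x => x + c) '' E = (fun y => -c + y) ⁻¹' E := by
    ext y
    constructor
    · rintro ⟨x, hx, rfl⟩; simpa using hx
    · intro h
      exact ⟨-c + y, h, by simp [add_comm, add_assoc]⟩
  rw [h]
  exact (measurePreserving_add_left volume (-c)).measure_preimage hE

lemma circle_full {X Y : Set (AddCircle L)} (hX : MeasurableSet X) (hY : MeasurableSet Y)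
    (h : ENNReal.ofReal L < volume X + volume Y) : X + Y = univ := by
  ext z
  simp only [mem_univ, iff_true]
  set Y' := (fun w => z - w) ⁻¹' Y with hY'def
  have hmp : MeasurePreserving (fun w : AddCircle L => z - w) volume volume := by
    have h1 : (fun w : AddCircle L => z - w) = (fun w => z + w) ∘ (fun w => -w) := by
      funext w; simp [sub_eq_add_neg]
    rw [h1]
    exact (measurePreserving_add_left volume z).comp (Measure.measurePreserving_neg volume)
  have hvol : volume Y' = volume Y := hmp.measure_preimage hY.nullMeasurableSet
  have hne : (X ∩ Y').Nonempty := by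
    rw [nonempty_iff_ne_empty]
    intro hemp
    have hdisj : Disjoint X Y' := disjoint_iff_inter_eq_empty.mpr hemp
    have hY'm : MeasurableSet Y' := hY.preimage hmp.measurable
    have hle : volume X + volume Y' ≤ volume (univ : Set (AddCircle L)) := by
      rw [← measure_union hdisj hY'm]
      exact measure_mono (subset_univ _)
    rw [hvol, AddCircle.measure_univ] at hle
    exact absurd (h.trans_le hle) (lt_irrefl _)
  obtain ⟨u, huX, huY⟩ := hne
  have h2 : u + (z - u) = z := by
    rw [add_comm, sub_add_cancel]
  exact h2 ▸ Set.add_mem_add huX huY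

lemma exists_thickening_lt {X : Set (AddCircle L)} (hX : IsCompact X) {ε : ℝ≥0∞} (hε : 0 < ε) :
    ∃ η : ℝ, 0 < η ∧ volume (Metric.cthickening η X) < volume X + ε := by
  have ht := tendsto_measure_cthickening_of_isCompact (μ := volume) hX
  have hlt : volume X < volume X + ε := ENNReal.lt_add_right (measure_ne_top _ _) hε.ne'
  have hev : ∀ᶠ r in 𝓝 (0:ℝ), volume (Metric.cthickening r X) < volume X + ε :=
    ht.eventually_lt_const hlt
  obtain ⟨δ, hδpos, hδ⟩ := Metric.eventually_nhds_iff_ball.mp hev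
  refine ⟨δ/2, by positivity, hδ (δ/2) ?_⟩
  rw [Metric.mem_ball, Real.dist_eq, sub_zero, abs_of_pos (by positivity)]
  linarith

/-- Lower semicontinuity-style stability of positivity of overlap. -/
lemma pos_stable {X Y : Set (AddCircle L)} (hX : IsCompact X) (hYm : MeasurableSet Y)
    {c₀ : AddCircle L}
    (h0 : 0 < volume (Y ∩ ((fun y => y + c₀) ⁻¹' X))) :
    ∃ η : ℝ, 0 < η ∧ ∀ c : AddCircle L, dist c c₀ < η →
      0 < volume (Y ∩ ((fun y => y + c) ⁻¹' X)) := by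
  obtain ⟨η, hηpos, hth⟩ := exists_thickening_lt hX h0
  refine ⟨η, hηpos, fun c hc => ?_⟩
  set f := fun d : AddCircle L => volume (Y ∩ ((fun y => y + d) ⁻¹' X)) with hfdef
  have hXm : MeasurableSet X := hX.measurableSet
  have hpre : ∀ d : AddCircle L, MeasurableSet ((fun y : AddCircle L => y + d) ⁻¹' X) :=
    fun d => hXm.preimage (measurable_add_const d)
  -- the difference set is controlled by a thickening
  have hdiffvol : volume ((Y ∩ ((fun y => y + c₀) ⁻¹' X)) \ ((fun y => y + c) ⁻¹' X))
      < volume (Y ∩ ((fun y => y + c₀) ⁻¹' X)) := by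
    have himg : (fun y : AddCircle L => y + c) ''
        ((Y ∩ ((fun y => y + c₀) ⁻¹' X)) \ ((fun y => y + c) ⁻¹' X))
        ⊆ ((fun x : AddCircle L => x + (c - c₀)) '' X) \ X := by
      rintro _ ⟨w, ⟨⟨_, hw1⟩, hw2⟩, rfl⟩
      constructor
      · exact ⟨w + c₀, hw1, by abel⟩
      · exact hw2
    have hsub2 : ((fun x : AddCircle L => x + (c - c₀)) '' X) \ X
        ⊆ (Metric.cthickening η X) \ X := by
      apply diff_subset_diff_left
      intro z hz
      obtain ⟨x, hx, rfl⟩ := hz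
      refine Metric.mem_cthickening_of_dist_le _ x _ _ hx ?_
      rw [dist_eq_norm, add_sub_cancel_left]
      calc ‖c - c₀‖ = dist c c₀ := by rw [dist_eq_norm]
        _ ≤ η := hc.le
    have hveq : volume ((Y ∩ ((fun y => y + c₀) ⁻¹' X)) \ ((fun y => y + c) ⁻¹' X))
        = volume ((fun y : AddCircle L => y + c) ''
            ((Y ∩ ((fun y => y + c₀) ⁻¹' X)) \ ((fun y => y + c) ⁻¹' X))) := by
      rw [vol_image_add]
      exact (((hYm.inter (hpre c₀)).diff (hpre c)).nullMeasurableSet)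
    have hthdiff : volume ((Metric.cthickening η X) \ X)
        < volume (Y ∩ ((fun y => y + c₀) ⁻¹' X)) := by
      have hXsub : X ⊆ Metric.cthickening η X := Metric.self_subset_cthickening X
      have hadd : volume X + volume ((Metric.cthickening η X) \ X)
          = volume (Metric.cthickening η X) := by
        rw [measure_add_diff hXm.nullMeasurableSet, union_eq_self_of_subset_left hXsub]
      have := hth
      rw [← hadd] at this
      exact (ENNReal.add_lt_add_iff_left (measure_ne_top _ _)).mp this
    calc volume ((Y ∩ ((fun y => y + c₀) ⁻¹' X)) \ ((fun y => y + c) ⁻¹' X))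
        ≤ volume ((Metric.cthickening η X) \ X) := by
          rw [hveq]; exact measure_mono (himg.trans hsub2)
      _ < _ := hthdiff
  -- now conclude positivity
  by_contra hzero
  push_neg at hzero
  have hz : volume (Y ∩ ((fun y => y + c) ⁻¹' X)) = 0 := le_antisymm hzero zero_le
  have hsplit : volume (Y ∩ ((fun y => y + c₀) ⁻¹' X))
      ≤ volume ((Y ∩ ((fun y => y + c₀) ⁻¹' X)) ∩ ((fun y => y + c) ⁻¹' X))
        + volume ((Y ∩ ((fun y => y + c₀) ⁻¹' X)) \ ((fun y => y + c) ⁻¹' X)) :=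
    measure_le_inter_add_diff _ _ _
  have h1 : volume ((Y ∩ ((fun y => y + c₀) ⁻¹' X)) ∩ ((fun y => y + c) ⁻¹' X)) = 0 := by
    refine le_antisymm ?_ zero_le
    rw [← hz]
    exact measure_mono (fun z hz' => ⟨hz'.1.1, hz'.2⟩)
  rw [h1, zero_add] at hsplit
  exact absurd (lt_of_le_of_lt hsplit hdiffvol) (lt_irrefl _)

lemma f_meas_int {X Y : Set (AddCircle L)} (hXm : MeasurableSet X) (hYm : MeasurableSet Y) :
    Measurable (fun c : AddCircle L => volume (Y ∩ ((fun y => y + c) ⁻¹' X))) ∧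
    ∫⁻ c, volume (Y ∩ ((fun y => y + c) ⁻¹' X)) ∂volume = volume X * volume Y := by
  have hE : MeasurableSet {p : AddCircle L × AddCircle L | p.2 ∈ Y ∧ p.2 + p.1 ∈ X} :=
    (measurable_snd hYm).inter ((measurable_snd.add measurable_fst) hXm)
  have hsec : ∀ c : AddCircle L,
      (Prod.mk c ⁻¹' {p : AddCircle L × AddCircle L | p.2 ∈ Y ∧ p.2 + p.1 ∈ X})
      = Y ∩ ((fun y => y + c) ⁻¹' X) := fun c => rfl
  constructor
  · have := measurable_measure_prodMk_left (ν := (volume : Measure (AddCircle L))) hE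
    simpa [hsec] using this
  · have h1 := Measure.prod_apply (μ := (volume : Measure (AddCircle L)))
      (ν := (volume : Measure (AddCircle L))) hE
    have h2 := Measure.prod_apply_symm (μ := (volume : Measure (AddCircle L)))
      (ν := (volume : Measure (AddCircle L))) hE
    have h3 : ∀ u : AddCircle L,
        volume ((fun c => (c, u)) ⁻¹' {p : AddCircle L × AddCircle L | p.2 ∈ Y ∧ p.2 + p.1 ∈ X})
        = Y.indicator (fun _ => volume X) u := by
      intro u
      by_cases hu : u ∈ Y
      · have he : ((fun c => (c, u)) ⁻¹'
            {p : AddCircle L × AddCircle L | p.2 ∈ Y ∧ p.2 + p.1 ∈ X})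
            = (fun c => u + c) ⁻¹' X := by
          ext c; simp [hu]
        rw [he, Set.indicator_of_mem hu]
        exact (measurePreserving_add_left volume u).measure_preimage hXm.nullMeasurableSet
      · have he : ((fun c => (c, u)) ⁻¹'
            {p : AddCircle L × AddCircle L | p.2 ∈ Y ∧ p.2 + p.1 ∈ X}) = ∅ := by
          ext c; simp [hu]
        rw [he, Set.indicator_of_notMem hu, measure_empty]
    have h4 : ∫⁻ u, volume ((fun c => (c, u)) ⁻¹'
        {p : AddCircle L × AddCircle L | p.2 ∈ Y ∧ p.2 + p.1 ∈ X}) ∂volume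
        = volume X * volume Y := by
      rw [funext h3, lintegral_indicator_const hYm]
    calc ∫⁻ c, volume (Y ∩ ((fun y => y + c) ⁻¹' X)) ∂volume
        = ∫⁻ c, volume (Prod.mk c ⁻¹'
            {p : AddCircle L × AddCircle L | p.2 ∈ Y ∧ p.2 + p.1 ∈ X}) ∂volume := by
          simp [hsec]
      _ = (volume.prod volume) {p : AddCircle L × AddCircle L | p.2 ∈ Y ∧ p.2 + p.1 ∈ X} :=
          h1.symm
      _ = volume X * volume Y := by rw [h2]; exact h4

lemma exists_le_div {f : AddCircle L → ℝ≥0∞} (hf : Measurable f) {m : ℝ≥0∞} (hm : m ≠ ⊤)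
    (hint : ∫⁻ c, f c ∂volume ≤ m * ENNReal.ofReal L) : ∃ c, f c ≤ m := by
  by_contra hcon
  push_neg at hcon
  have hLpos : (0:ℝ) < L := Fact.out
  set S : ℕ → Set (AddCircle L) := fun n => {c | m + (n : ℝ≥0∞)⁻¹ ≤ f c} with hSdef
  have hScover : (Set.univ : Set (AddCircle L)) = ⋃ n : ℕ, S n := by
    ext c
    simp only [mem_univ, true_iff, mem_iUnion, hSdef, mem_setOf_eq]
    rcases ENNReal.lt_iff_exists_add_pos_lt.mp (hcon c) with ⟨r, hrpos, hlt⟩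
    obtain ⟨n, hn⟩ := ENNReal.exists_inv_nat_lt (show (r : ℝ≥0∞) ≠ 0 by
      simpa using hrpos.ne')
    exact ⟨n, le_trans (add_le_add_right hn.le m) hlt.le⟩
  have hSmeas : ∀ n, MeasurableSet (S n) := fun n => measurableSet_le measurable_const hf
  have hpos : ∃ n, volume (S n) ≠ 0 := by
    by_contra hall
    push_neg at hall
    have : volume (Set.univ : Set (AddCircle L)) = 0 := by
      rw [hScover]
      exact measure_iUnion_null hall
    rw [AddCircle.measure_univ] at this
    rw [ENNReal.ofReal_eq_zero] at this
    linarith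
  obtain ⟨n, hn⟩ := hpos
  have hg : ∀ c, m + (S n).indicator (fun _ => (n : ℝ≥0∞)⁻¹) c ≤ f c := by
    intro c
    by_cases hcS : c ∈ S n
    · rw [Set.indicator_of_mem hcS]; exact hcS
    · rw [Set.indicator_of_notMem hcS, add_zero]; exact (hcon c).le
  have hgint : ∫⁻ c, (m + (S n).indicator (fun _ => (n : ℝ≥0∞)⁻¹) c) ∂volume
      = m * ENNReal.ofReal L + (n : ℝ≥0∞)⁻¹ * volume (S n) := by
    rw [lintegral_add_left measurable_const, lintegral_const, AddCircle.measure_univ,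
      lintegral_indicator_const (hSmeas n)]
  have hle : m * ENNReal.ofReal L + (n : ℝ≥0∞)⁻¹ * volume (S n) ≤ m * ENNReal.ofReal L := by
    rw [← hgint]
    exact le_trans (lintegral_mono hg) hint
  have hne : m * ENNReal.ofReal L ≠ ⊤ := ENNReal.mul_ne_top hm ENNReal.ofReal_ne_top
  have h0 : (n : ℝ≥0∞)⁻¹ * volume (S n) = 0 := by
    have := (ENNReal.add_le_add_iff_left hne).mp (by simpa using hle : m * ENNReal.ofReal L + (n : ℝ≥0∞)⁻¹ * volume (S n) ≤ m * ENNReal.ofReal L + 0)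
    exact le_antisymm this zero_le
  rcases mul_eq_zero.mp h0 with h | h
  · exact absurd h (ENNReal.inv_ne_zero.mpr (ENNReal.natCast_ne_top n))
  · exact hn h

lemma circle_bound {X Y : Set (AddCircle L)} (hX : IsCompact X) (hY : IsCompact Y)
    (hXne : X.Nonempty) (hYne : Y.Nonempty) :
    min (volume X + volume Y) (ENNReal.ofReal L) ≤ volume (X + Y) := by
  have hLpos : (0:ℝ) < L := Fact.out
  rcases lt_or_ge (ENNReal.ofReal L) (volume X + volume Y) with hlt | hle
  · rw [circle_full hX.measurableSet hY.measurableSet hlt, AddCircle.measure_univ]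
    exact min_le_right _ _
  · rw [min_eq_left hle]
    set S := X + Y with hSdef
    have hScpt : IsCompact S := hX.add hY
    refine ENNReal.le_of_forall_pos_le_add fun ε hεpos hSfin => ?_
    by_contra hcon
    push_neg at hcon
    set σ : ℝ≥0∞ := volume X + volume Y with hσdef
    have hσne : σ ≠ ⊤ := (lt_of_le_of_lt hle ENNReal.ofReal_lt_top).ne
    set Pred : Set (AddCircle L) → Set (AddCircle L) → Prop := fun X' Y' =>
      IsCompact X' ∧ IsCompact Y' ∧ X'.Nonempty ∧ Y'.Nonempty ∧ X' + Y' ⊆ S ∧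
        σ ≤ volume X' + volume Y' with hPreddef
    have hub : ∀ X' Y', Pred X' Y' → volume X' ≤ volume S := by
      rintro X' Y' ⟨hc1, _, _, ⟨y₀, hy₀⟩, hsub, _⟩
      have himg : (fun x => x + y₀) '' X' ⊆ S := by
        rintro _ ⟨x, hx, rfl⟩; exact hsub (Set.add_mem_add hx hy₀)
      calc volume X' = volume ((fun x => x + y₀) '' X') :=
            (vol_image_add y₀ hc1.measurableSet.nullMeasurableSet).symm
        _ ≤ volume S := measure_mono himg
    have hSlt : volume S < σ := lt_of_le_of_lt le_self_add hcon
    have htrans : ∀ X' Y' (c : AddCircle L), Pred X' Y' →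
        (Y' ∩ ((fun y => y + c) ⁻¹' X')).Nonempty →
        Pred (X' ∪ ((fun y => y + c) '' Y')) (Y' ∩ ((fun y => y + c) ⁻¹' X')) ∧
        volume (X' ∪ ((fun y => y + c) '' Y')) + volume (Y' ∩ ((fun y => y + c) ⁻¹' X'))
          = volume X' + volume Y' := by
      rintro X' Y' c ⟨hc1, hc2, hne1, hne2, hsub, hσ'⟩ hne
      have himgc : IsCompact ((fun y => y + c) '' Y') := hc2.image (continuous_add_right c)
      have hq1c : IsCompact (X' ∪ ((fun y => y + c) '' Y')) := hc1.union himgc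
      have hq2c : IsCompact (Y' ∩ ((fun y => y + c) ⁻¹' X')) :=
        hc2.inter_right ((hc1.isClosed).preimage (continuous_add_right c))
      have hsum : (X' ∪ ((fun y => y + c) '' Y')) + (Y' ∩ ((fun y => y + c) ⁻¹' X')) ⊆ S := by
        rintro z hz
        rw [Set.mem_add] at hz
        obtain ⟨u, hu, v, hv, rfl⟩ := hz
        rcases hu with hu | hu
        · exact hsub (Set.add_mem_add hu hv.1)
        · obtain ⟨y', hy', rfl⟩ := hu
          have hco : y' + c + v = (v + c) + y' := by abel
          rw [hco]
          exact hsub (Set.add_mem_add hv.2 hy')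
      have hkey : volume (Y' ∩ ((fun y => y + c) ⁻¹' X'))
          = volume (X' ∩ ((fun y => y + c) '' Y')) := by
        have him : (fun y => y + c) '' (Y' ∩ ((fun y => y + c) ⁻¹' X'))
            = X' ∩ ((fun y => y + c) '' Y') := by
          ext z; constructor
          · rintro ⟨y, ⟨hy1, hy2⟩, rfl⟩; exact ⟨hy2, ⟨y, hy1, rfl⟩⟩
          · rintro ⟨hz1, ⟨y, hy, rfl⟩⟩; exact ⟨y, ⟨hy, hz1⟩, rfl⟩
        rw [← him, vol_image_add]
        exact (hc2.measurableSet.inter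
          ((hc1.measurableSet).preimage (measurable_add_const c))).nullMeasurableSet
      have heq : volume (X' ∪ ((fun y => y + c) '' Y'))
          + volume (Y' ∩ ((fun y => y + c) ⁻¹' X')) = volume X' + volume Y' := by
        rw [hkey, measure_union_add_inter' hc1.measurableSet ((fun y => y + c) '' Y'),
          vol_image_add c hc2.measurableSet.nullMeasurableSet]
      obtain ⟨x₁, hx₁⟩ := hne1
      refine ⟨⟨hq1c, hq2c, ⟨x₁, Or.inl hx₁⟩, hne, hsum, ?_⟩, heq⟩
      rw [heq]; exact hσ'
    have hAcase : ∀ X' Y' (c : AddCircle L), Pred X' Y' →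
        (Y' ∩ ((fun y => y + c) ⁻¹' X')).Nonempty →
        volume (Y' ∩ ((fun y => y + c) ⁻¹' X')) ≠ 0 := by
      rintro X' Y' c hp hne h0
      obtain ⟨hq, heq⟩ := htrans X' Y' c hp hne
      have h1 : σ ≤ volume (X' ∪ ((fun y => y + c) '' Y')) := by
        have h2 := hq.2.2.2.2.2
        rwa [h0, add_zero] at h2
      exact absurd (lt_of_lt_of_le hSlt (h1.trans (hub _ _ hq))) (lt_irrefl _)
    -- pass to real numbers
    set εR := (ε : ℝ) with hεRdef
    have hεRpos : 0 < εR := hεpos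
    set SR := (volume S).toReal with hSRdef
    set σR := σ.toReal with hσRdef
    have hSne : volume S ≠ ⊤ := hSfin.ne
    have hSRσ : SR + εR < σR := by
      have := ENNReal.toReal_lt_toReal (by simp [hSne] : volume S + (ε:ℝ≥0∞) ≠ ⊤) hσne |>.mpr hcon
      rwa [ENNReal.toReal_add hSne ENNReal.coe_ne_top, ENNReal.coe_toReal] at this
    have hσL : σR ≤ L := by
      have := ENNReal.toReal_mono ENNReal.ofReal_ne_top hle
      rwa [ENNReal.toReal_ofReal hLpos.le] at this
    set V : Set ℝ := {r : ℝ | ∃ X' Y', Pred X' Y' ∧ (volume X').toReal = r} with hVdef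
    have hVne : V.Nonempty :=
      ⟨(volume X).toReal, X, Y, ⟨hX, hY, hXne, hYne, subset_rfl, le_rfl⟩, rfl⟩
    have hVbdd : BddAbove V := by
      refine ⟨SR, ?_⟩
      rintro r ⟨X', Y', hp, rfl⟩
      exact ENNReal.toReal_mono hSne (hub _ _ hp)
    set s := sSup V with hsdef
    set δ := εR^2/(2*L) with hδdef
    have hδpos : 0 < δ := by positivity
    obtain ⟨r, hrV, hrgt⟩ := exists_lt_of_lt_csSup hVne (show s - δ < s by linarith)
    obtain ⟨X', Y', hp, rfl⟩ := hrV
    obtain ⟨hX'c, hY'c, hX'ne, hY'ne, hsubS, hσle⟩ := hp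
    have hp' : Pred X' Y' := ⟨hX'c, hY'c, hX'ne, hY'ne, hsubS, hσle⟩
    have hApos : ∀ c, (Y' ∩ ((fun y => y + c) ⁻¹' X')).Nonempty →
        volume (Y' ∩ ((fun y => y + c) ⁻¹' X')) ≠ 0 :=
      fun c hne => hAcase X' Y' c hp' hne
    set D' : Set (AddCircle L) := {c | 0 < volume (Y' ∩ ((fun y => y + c) ⁻¹' X'))} with hD'def
    have hD'open : IsOpen D' := by
      rw [isOpen_iff_mem_nhds]
      intro c₀ hc₀
      obtain ⟨η, hηpos, hη⟩ := pos_stable hX'c hY'c.measurableSet hc₀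
      rw [Metric.mem_nhds_iff]
      exact ⟨η, hηpos, fun c hc => hη c (by rwa [Metric.mem_ball] at hc)⟩
    have hD'eq : D' = X' - Y' := by
      ext c
      simp only [hD'def, mem_setOf_eq, Set.mem_sub]
      constructor
      · intro hpos
        obtain ⟨y, hy, hyx⟩ := nonempty_of_measure_ne_zero hpos.ne'
        exact ⟨y + c, hyx, y, hy, by abel⟩
      · rintro ⟨a, ha, b, hb, rfl⟩
        have hmem : b ∈ Y' ∩ ((fun y => y + (a - b)) ⁻¹' X') := ⟨hb, by simpa using ha⟩
        exact pos_iff_ne_zero.mpr (hApos _ ⟨b, hmem⟩)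
    have hD'closed : IsClosed D' := by
      rw [hD'eq, sub_eq_add_neg]
      exact (hX'c.add hY'c.neg).isClosed
    have hD'ne : D'.Nonempty := by
      obtain ⟨a, ha⟩ := hX'ne
      obtain ⟨b, hb⟩ := hY'ne
      rw [hD'eq]
      exact ⟨a - b, Set.sub_mem_sub ha hb⟩
    have hD'univ : D' = Set.univ := IsClopen.eq_univ ⟨hD'closed, hD'open⟩ hD'ne
    obtain ⟨hfmeas, hfint⟩ := f_meas_int hX'c.measurableSet hY'c.measurableSet
    have hLne0 : ENNReal.ofReal L ≠ 0 := ((ENNReal.ofReal_pos).mpr hLpos).ne'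
    set m : ℝ≥0∞ := volume X' * volume Y' / ENNReal.ofReal L with hmdef
    have hmne : m ≠ ⊤ := by
      rw [hmdef]
      exact (ENNReal.div_lt_top (ENNReal.mul_ne_top (measure_ne_top _ _) (measure_ne_top _ _))
        hLne0).ne
    have hintle : ∫⁻ c, volume (Y' ∩ ((fun y => y + c) ⁻¹' X')) ∂volume
        ≤ m * ENNReal.ofReal L := by
      rw [hfint, hmdef, ENNReal.div_mul_cancel hLne0 ENNReal.ofReal_ne_top]
    obtain ⟨c₀, hc₀⟩ := exists_le_div hfmeas hmne hintle
    have hc₀mem : c₀ ∈ D' := hD'univ.symm ▸ Set.mem_univ c₀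
    have hc₀pos : 0 < volume (Y' ∩ ((fun y => y + c₀) ⁻¹' X')) := hc₀mem
    have hc₀ne : (Y' ∩ ((fun y => y + c₀) ⁻¹' X')).Nonempty :=
      nonempty_of_measure_ne_zero hc₀pos.ne'
    obtain ⟨hq, heq⟩ := htrans X' Y' c₀ hp' hc₀ne
    -- real arithmetic
    set xR := (volume X').toReal with hxRdef
    set yR := (volume Y').toReal with hyRdef
    set fR := (volume (Y' ∩ ((fun y => y + c₀) ⁻¹' X'))).toReal with hfRdef
    set q1R := (volume (X' ∪ ((fun y => y + c₀) '' Y'))).toReal with hq1Rdef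
    have hsum_eq : q1R + fR = xR + yR := by
      have := congrArg ENNReal.toReal heq
      rwa [ENNReal.toReal_add (measure_ne_top _ _) (measure_ne_top _ _),
        ENNReal.toReal_add (measure_ne_top _ _) (measure_ne_top _ _)] at this
    have hfle : fR ≤ xR * yR / L := by
      have := ENNReal.toReal_mono hmne hc₀
      rwa [hmdef, ENNReal.toReal_div, ENNReal.toReal_mul,
        ENNReal.toReal_ofReal hLpos.le] at this
    have hxSR : xR ≤ SR := ENNReal.toReal_mono hSne (hub _ _ hp')
    have hσxy : σR ≤ xR + yR := by
      rw [hσRdef, hxRdef, hyRdef,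
        ← ENNReal.toReal_add (measure_ne_top volume X') (measure_ne_top volume Y')]
      exact ENNReal.toReal_mono
        (ENNReal.add_ne_top.mpr ⟨measure_ne_top volume X', measure_ne_top volume Y'⟩) hσle
    have hxnn : 0 ≤ xR := ENNReal.toReal_nonneg
    have hynn : 0 ≤ yR := ENNReal.toReal_nonneg
    have hyε : εR < yR := by linarith
    have hxLε : xR < L - εR := by linarith
    have hxLε' : εR < L - xR := by linarith
    have hprod : εR * εR < yR * (L - xR) :=
      mul_lt_mul'' hyε hxLε' hεRpos.le hεRpos.le
    have hfLle : fR * L ≤ xR * yR := by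
      have h := hfle
      rw [le_div_iff₀ hLpos] at h
      exact h
    have hq1le : q1R ≤ s := le_csSup hVbdd ⟨_, _, hq, rfl⟩
    have h1 : (xR + yR - fR) ≤ s := by linarith
    have hδL : δ * L = εR^2/2 := by
      rw [hδdef]; field_simp
    nlinarith [mul_le_mul_of_nonneg_right h1 hLpos.le, hδL, hprod, hfLle,
      mul_lt_mul_of_pos_right (show s - δ < xR from hrgt) hLpos, hLpos]

lemma vol_image_add_real (c : ℝ) {E : Set ℝ} (hE : NullMeasurableSet E volume) :
    volume ((fun x => x + c) '' E) = volume E := by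
  have h : (fun x : ℝ => x + c) '' E = (fun y : ℝ => y + -c) ⁻¹' E := by
    ext y
    constructor
    · rintro ⟨x, hx, rfl⟩; simpa using hx
    · intro h; exact ⟨y + -c, h, by ring⟩
  rw [h]
  exact (measurePreserving_add_right volume (-c)).measure_preimage hE

lemma measurableSet_image_mk {E : Set ℝ} (hE : MeasurableSet E) :
    MeasurableSet ((QuotientAddGroup.mk : ℝ → AddCircle L) '' E) := by
  have h : MeasurableSet ((QuotientAddGroup.mk : ℝ → AddCircle L) ⁻¹'
      (QuotientAddGroup.mk '' E)) := by
    rw [QuotientAddGroup.preimage_image_mk]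
    exact MeasurableSet.iUnion fun x => (measurable_add_const _) hE
  exact h

lemma vol_image_mk (a : ℝ) {E : Set ℝ} (hEm : MeasurableSet E) (hEsub : E ⊆ Ioc a (a + L)) :
    volume ((QuotientAddGroup.mk : ℝ → AddCircle L) '' E) = volume E := by
  have hLpos : (0:ℝ) < L := Fact.out
  have hmeas := measurableSet_image_mk (L := L) hEm
  have h1 := (AddCircle.measurePreserving_mk L a).measure_preimage hmeas.nullMeasurableSet
  have h2 : ((QuotientAddGroup.mk : ℝ → AddCircle L) ⁻¹' (QuotientAddGroup.mk '' E))
      ∩ Ioc a (a + L) = E := by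
    apply Subset.antisymm
    · rintro u ⟨humem, huIoc⟩
      obtain ⟨e, heE, hee⟩ := humem
      have hsub : e - u ∈ AddSubgroup.zmultiples L := by
        rwa [QuotientAddGroup.eq_iff_sub_mem] at hee
      obtain ⟨k, hk⟩ := AddSubgroup.mem_zmultiples_iff.mp hsub
      have hkr : (k : ℝ) * L = e - u := by
        rw [← hk]; simp [zsmul_eq_mul]
      have heIoc := hEsub heE
      have hb1 : -L < e - u := by
        have := heIoc.1; have := huIoc.2; linarith
      have hb2 : e - u < L := by
        have := heIoc.2; have := huIoc.1; linarith
      have hk0 : k = 0 := by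
        by_contra hk0
        rcases lt_or_gt_of_ne hk0 with hneg | hpos
        · have : (k:ℝ) ≤ -1 := by exact_mod_cast Int.le_sub_one_iff.mpr hneg
          nlinarith
        · have : (1:ℝ) ≤ (k:ℝ) := by exact_mod_cast hpos
          nlinarith
      have : e = u := by
        rw [hk0] at hkr; simp at hkr; linarith
      rwa [← this]
    · intro e heE
      exact ⟨⟨e, heE, rfl⟩, hEsub heE⟩
  rw [← h1]
  have h3 : (volume.restrict (Ioc a (a + L)))
      ((QuotientAddGroup.mk : ℝ → AddCircle L) ⁻¹' (QuotientAddGroup.mk '' E))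
      = volume E := by
    rw [Measure.restrict_apply (AddCircle.measurable_mk' hmeas), h2]
  exact h3

lemma core {K₁ K₂ : Set ℝ} (h1 : IsCompact K₁) (h2 : IsCompact K₂)
    (h1sub : K₁ ⊆ Icc 0 L) (h01 : (0:ℝ) ∈ K₁) (hL1 : L ∈ K₁)
    (h2sub : K₂ ⊆ Icc 0 L) (h2ne : K₂.Nonempty) :
    min (volume K₁ + volume K₂) (ENNReal.ofReal L) + volume K₂ ≤ volume (K₁ + K₂) := by
  have hLpos : (0:ℝ) < L := Fact.out
  set π : ℝ → AddCircle L := (QuotientAddGroup.mk : ℝ → AddCircle L) with hπdef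
  set S := K₁ + K₂ with hSdef
  have hScpt : IsCompact S := h1.add h2
  have hSsub : S ⊆ Icc 0 (L + L) := by
    rintro z hz
    rw [Set.mem_add] at hz
    obtain ⟨a, ha, b, hb, rfl⟩ := hz
    have ha' := h1sub ha
    have hb' := h2sub hb
    exact ⟨by linarith [ha'.1, hb'.1], by linarith [ha'.2, hb'.2]⟩
  set S₁ := S ∩ Ioc 0 L with hS₁def
  set S₂ := S ∩ Ioc L (L + L) with hS₂def
  have hS₁m : MeasurableSet S₁ := hScpt.measurableSet.inter measurableSet_Ioc
  have hS₂m : MeasurableSet S₂ := hScpt.measurableSet.inter measurableSet_Ioc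
  have hdisj : Disjoint S₁ S₂ :=
    (Set.Ioc_disjoint_Ioc_of_le le_rfl).mono inter_subset_right inter_subset_right
  have hsplit : volume S₁ + volume S₂ ≤ volume S := by
    rw [← measure_union hdisj hS₂m]
    exact measure_mono (union_subset inter_subset_left inter_subset_left)
  have he₁ : volume (π '' S₁) = volume S₁ :=
    vol_image_mk 0 hS₁m (by rw [zero_add]; exact inter_subset_right)
  have he₂ : volume (π '' S₂) = volume S₂ := vol_image_mk L hS₂m inter_subset_right
  have hm₁ : MeasurableSet (π '' S₁) := measurableSet_image_mk hS₁m
  have hm₂ : MeasurableSet (π '' S₂) := measurableSet_image_mk hS₂m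
  have hsum2 : volume (π '' S₁) + volume (π '' S₂)
      = volume ((π '' S₁) ∪ (π '' S₂)) + volume ((π '' S₁) ∩ (π '' S₂)) :=
    (measure_union_add_inter' hm₁ _).symm
  -- cutting lemma
  have hcut : ∀ K : Set ℝ, MeasurableSet K → K ⊆ Icc 0 L → volume K ≤ volume (K ∩ Ioc 0 L) := by
    intro K hKm hKsub
    have hsub' : K ⊆ (K ∩ Ioc 0 L) ∪ {0} := by
      intro x hx
      rcases (hKsub hx) with ⟨hx0, hxL⟩
      rcases eq_or_lt_of_le hx0 with heq | hlt
      · exact Or.inr (by simp [← heq])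
      · exact Or.inl ⟨hx, hlt, hxL⟩
    calc volume K ≤ volume ((K ∩ Ioc 0 L) ∪ {0}) := measure_mono hsub'
      _ ≤ volume (K ∩ Ioc 0 L) + volume ({(0:ℝ)}) := measure_union_le _ _
      _ = volume (K ∩ Ioc 0 L) := by rw [Real.volume_singleton, add_zero]
  -- overlap
  set W := K₂ ∩ Ioc 0 L with hWdef
  have hWm : MeasurableSet W := h2.measurableSet.inter measurableSet_Ioc
  have hWvol : volume K₂ ≤ volume W := hcut K₂ h2.measurableSet h2sub
  have hWvol2 : volume (π '' W) = volume W :=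
    vol_image_mk 0 hWm (by rw [zero_add]; exact inter_subset_right)
  have hover : (π '' W) ⊆ (π '' S₁) ∩ (π '' S₂) := by
    rintro _ ⟨w, hw, rfl⟩
    constructor
    · refine ⟨w, ⟨?_, hw.2⟩, rfl⟩
      have := Set.add_mem_add h01 hw.1
      rwa [zero_add] at this
    · refine ⟨L + w, ⟨Set.add_mem_add hL1 hw.1, ?_, ?_⟩, ?_⟩
      · linarith [hw.2.1]
      · linarith [hw.2.2]
      · rw [hπdef, QuotientAddGroup.eq_iff_sub_mem]
        simpa using AddSubgroup.mem_zmultiples L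
  have hovervol : volume K₂ ≤ volume ((π '' S₁) ∩ (π '' S₂)) := by
    calc volume K₂ ≤ volume W := hWvol
      _ = volume (π '' W) := hWvol2.symm
      _ ≤ volume ((π '' S₁) ∩ (π '' S₂)) := measure_mono hover
  -- covering of π '' S
  have hScover : (π '' S) ⊆ ((π '' S₁) ∪ (π '' S₂)) ∪ {(0 : AddCircle L)} := by
    rintro _ ⟨z, hz, rfl⟩
    rcases hSsub hz with ⟨hz0, hz2⟩
    rcases eq_or_lt_of_le hz0 with heq | hzpos
    · exact Or.inr (by simp [hπdef, ← heq])
    · rcases le_or_gt z L with hzL | hzL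
      · exact Or.inl (Or.inl ⟨z, ⟨hz, hzpos, hzL⟩, rfl⟩)
      · exact Or.inl (Or.inr ⟨z, ⟨hz, hzL, hz2⟩, rfl⟩)
  have hSvol : volume (π '' S) ≤ volume ((π '' S₁) ∪ (π '' S₂)) := by
    calc volume (π '' S) ≤ volume (((π '' S₁) ∪ (π '' S₂)) ∪ {(0 : AddCircle L)}) :=
          measure_mono hScover
      _ ≤ volume ((π '' S₁) ∪ (π '' S₂)) + volume ({(0 : AddCircle L)}) := measure_union_le _ _
      _ = volume ((π '' S₁) ∪ (π '' S₂)) := by rw [vol_singleton, add_zero]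
  -- the circle sets
  have hXc : IsCompact (π '' K₁) := h1.image (AddCircle.continuous_mk' L)
  have hYc : IsCompact (π '' K₂) := h2.image (AddCircle.continuous_mk' L)
  have hXne : (π '' K₁).Nonempty := ⟨π 0, 0, h01, rfl⟩
  obtain ⟨b₀, hb₀⟩ := h2ne
  have hYne : (π '' K₂).Nonempty := ⟨π b₀, b₀, hb₀, rfl⟩
  have hXY : (π '' K₁) + (π '' K₂) ⊆ π '' S := by
    rintro z hz
    rw [Set.mem_add] at hz
    obtain ⟨x, ⟨a, ha, rfl⟩, y, ⟨b, hb, rfl⟩, rfl⟩ := hz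
    exact ⟨a + b, Set.add_mem_add ha hb, rfl⟩
  have hXvol : volume K₁ ≤ volume (π '' K₁) := by
    calc volume K₁ ≤ volume (K₁ ∩ Ioc 0 L) := hcut K₁ h1.measurableSet h1sub
      _ = volume (π '' (K₁ ∩ Ioc 0 L)) :=
          (vol_image_mk 0 (h1.measurableSet.inter measurableSet_Ioc)
            (by rw [zero_add]; exact inter_subset_right)).symm
      _ ≤ volume (π '' K₁) := measure_mono (image_mono inter_subset_left)
  have hYvol : volume K₂ ≤ volume (π '' K₂) := by
    calc volume K₂ ≤ volume (K₂ ∩ Ioc 0 L) := hcut K₂ h2.measurableSet h2sub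
      _ = volume (π '' (K₂ ∩ Ioc 0 L)) :=
          (vol_image_mk 0 (h2.measurableSet.inter measurableSet_Ioc)
            (by rw [zero_add]; exact inter_subset_right)).symm
      _ ≤ volume (π '' K₂) := measure_mono (image_mono inter_subset_left)
  have hcb := circle_bound hXc hYc hXne hYne
  calc min (volume K₁ + volume K₂) (ENNReal.ofReal L) + volume K₂
      ≤ min (volume (π '' K₁) + volume (π '' K₂)) (ENNReal.ofReal L)
        + volume ((π '' S₁) ∩ (π '' S₂)) :=
        add_le_add (min_le_min (add_le_add hXvol hYvol) le_rfl) hovervol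
    _ ≤ volume ((π '' K₁) + (π '' K₂)) + volume ((π '' S₁) ∩ (π '' S₂)) :=
        add_le_add_left hcb _
    _ ≤ volume (π '' S) + volume ((π '' S₁) ∩ (π '' S₂)) :=
        add_le_add_left (measure_mono hXY) _
    _ ≤ volume ((π '' S₁) ∪ (π '' S₂)) + volume ((π '' S₁) ∩ (π '' S₂)) :=
        add_le_add_left hSvol _
    _ = volume (π '' S₁) + volume (π '' S₂) := hsum2.symm
    _ = volume S₁ + volume S₂ := by rw [he₁, he₂]
    _ ≤ volume S := hsplit

end OneDimFreiman

namespace OneDimFreiman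

lemma volume_hull (A : Set ℝ) (hne : A.Nonempty) (hbd : Bornology.IsBounded A) :
    volume (convexHull ℝ A) = ENNReal.ofReal (sSup A - sInf A) := by
  have hbb := hbd.bddBelow
  have hba := hbd.bddAbove
  have hsub : convexHull ℝ A ⊆ Icc (sInf A) (sSup A) :=
    convexHull_min (fun a ha => ⟨csInf_le hbb ha, le_csSup hba ha⟩) (convex_Icc _ _)
  have hsup : Ioo (sInf A) (sSup A) ⊆ convexHull ℝ A := by
    intro x hx
    obtain ⟨a, ha, hax⟩ := exists_lt_of_csInf_lt hne hx.1
    obtain ⟨b, hb, hxb⟩ := exists_lt_of_lt_csSup hne hx.2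
    have hseg : Icc a b ⊆ convexHull ℝ A := by
      rw [← segment_eq_Icc (by linarith)]
      exact (convex_convexHull ℝ A).segment_subset
        (subset_convexHull ℝ A ha) (subset_convexHull ℝ A hb)
    exact hseg ⟨hax.le, hxb.le⟩
  refine le_antisymm ?_ ?_
  · calc volume (convexHull ℝ A) ≤ volume (Icc (sInf A) (sSup A)) := measure_mono hsub
      _ = ENNReal.ofReal (sSup A - sInf A) := Real.volume_Icc
  · calc ENNReal.ofReal (sSup A - sInf A) = volume (Ioo (sInf A) (sSup A)) :=
        Real.volume_Ioo.symm
      _ ≤ volume (convexHull ℝ A) := measure_mono hsup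

lemma approx_step (A B : Set ℝ) (hAne : A.Nonempty) (hBne : B.Nonempty)
    (hAbd : Bornology.IsBounded A) (hBbd : Bornology.IsBounded B)
    (hA : MeasurableSet A) (hB : MeasurableSet B)
    (hlen : sSup B - sInf B ≤ sSup A - sInf A) (hlt : sInf A < sSup A)
    {δ : ℝ} (hδ : 0 < δ) (hδ4 : δ ≤ (sSup A - sInf A)/4) :
    min (volume A + volume B) (ENNReal.ofReal (sSup A - sInf A)) + volume B
      ≤ volume (A + B) + ENNReal.ofReal (8*δ) := by
  have hAbb := hAbd.bddBelow
  have hAba := hAbd.bddAbove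
  have hBbb := hBbd.bddBelow
  have hBba := hBbd.bddAbove
  set iA := sInf A with hiAdef
  set sA := sSup A with hsAdef
  set iB := sInf B with hiBdef
  set sB := sSup B with hsBdef
  obtain ⟨a₁, ha₁A, ha₁⟩ := exists_lt_of_csInf_lt hAne (lt_add_of_pos_right iA hδ)
  obtain ⟨a₂, ha₂A, ha₂⟩ := exists_lt_of_lt_csSup hAne (sub_lt_self sA hδ)
  have hδe : ENNReal.ofReal δ ≠ 0 := ((ENNReal.ofReal_pos).mpr hδ).ne'
  obtain ⟨KA0, hKA0sub, hKA0c, hKA0v⟩ :=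
    hA.exists_isCompact_lt_add (μ := volume) (hAbd.measure_lt_top.ne) hδe
  set KA := insert a₁ (insert a₂ KA0) with hKAdef
  have hKAc : IsCompact KA := ((hKA0c.insert a₂).insert a₁)
  have hKAsub : KA ⊆ A := by
    intro x hx
    rcases hx with rfl | hx
    · exact ha₁A
    · rcases hx with rfl | hx
      · exact ha₂A
      · exact hKA0sub hx
  have hKAne : KA.Nonempty := ⟨a₁, Set.mem_insert _ _⟩
  set mA := sInf KA with hmAdef
  set MA := sSup KA with hMAdef
  have hmAmem : mA ∈ KA := hKAc.sInf_mem hKAne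
  have hMAmem : MA ∈ KA := hKAc.sSup_mem hKAne
  have hmA_lb : iA ≤ mA := csInf_le hAbb (hKAsub hmAmem)
  have hMA_ub : MA ≤ sA := le_csSup hAba (hKAsub hMAmem)
  have hmA_ub : mA ≤ a₁ := csInf_le hKAc.bddBelow (Set.mem_insert _ _)
  have hMA_lb : a₂ ≤ MA := le_csSup hKAc.bddAbove (Set.mem_insert_of_mem _ (Set.mem_insert _ _))
  set L := MA - mA with hLdef
  have hLlb : sA - iA - 2*δ ≤ L := by
    rw [hLdef]; linarith
  have hLub : L ≤ sA - iA := by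
    rw [hLdef]; linarith
  have hLpos : 0 < L := by
    rw [hLdef]; linarith
  haveI : Fact (0 < L) := ⟨hLpos⟩
  -- B side
  obtain ⟨b₀, hb₀⟩ := hBne
  obtain ⟨KB0, hKB0sub, hKB0c, hKB0v⟩ :=
    hB.exists_isCompact_lt_add (μ := volume) (hBbd.measure_lt_top.ne) hδe
  set KB1 := insert b₀ KB0 with hKB1def
  have hKB1c : IsCompact KB1 := hKB0c.insert b₀
  have hKB1sub : KB1 ⊆ B := by
    intro x hx
    rcases hx with rfl | hx
    · exact hb₀
    · exact hKB0sub hx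
  have hKB1ne : KB1.Nonempty := ⟨b₀, Set.mem_insert _ _⟩
  set mB := sInf KB1 with hmBdef
  have hmBmem : mB ∈ KB1 := hKB1c.sInf_mem hKB1ne
  set KB := KB1 ∩ Icc mB (mB + L) with hKBdef
  have hKBc : IsCompact KB := hKB1c.inter_right isClosed_Icc
  have hKBsub : KB ⊆ B := fun x hx => hKB1sub hx.1
  have hKBne : KB.Nonempty := ⟨mB, hmBmem, le_rfl, by linarith⟩
  have hKB1cover : KB1 ⊆ KB ∪ Ioc (mB + L) (mB + (sB - iB)) := by
    intro x hx
    have hx1 : mB ≤ x := csInf_le hKB1c.bddBelow hx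
    have hx2 : x ≤ sB := le_csSup hBba (hKB1sub hx)
    have hx3 : iB ≤ mB := csInf_le hBbb (hKB1sub hmBmem)
    rcases le_or_gt x (mB + L) with hle | hgt
    · exact Or.inl ⟨hx, hx1, hle⟩
    · exact Or.inr ⟨hgt, by linarith⟩
  have hKB1vol : volume KB1 ≤ volume KB + ENNReal.ofReal (2*δ) := by
    calc volume KB1 ≤ volume (KB ∪ Ioc (mB + L) (mB + (sB - iB))) := measure_mono hKB1cover
      _ ≤ volume KB + volume (Ioc (mB + L) (mB + (sB - iB))) := measure_union_le _ _
      _ ≤ volume KB + ENNReal.ofReal (2*δ) := by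
          refine add_le_add_right ?_ _
          rw [Real.volume_Ioc]
          apply ENNReal.ofReal_le_ofReal
          linarith
  have hvolB : volume B ≤ volume KB + ENNReal.ofReal (3*δ) := by
    have h1 : volume B ≤ volume KB0 + ENNReal.ofReal δ := hKB0v.le
    have h2 : volume KB0 ≤ volume KB1 := measure_mono (Set.subset_insert _ _)
    calc volume B ≤ volume KB1 + ENNReal.ofReal δ := le_trans h1 (add_le_add_left h2 _)
      _ ≤ volume KB + ENNReal.ofReal (2*δ) + ENNReal.ofReal δ :=
          add_le_add_left hKB1vol _
      _ = volume KB + ENNReal.ofReal (3*δ) := by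
          rw [add_assoc, ← ENNReal.ofReal_add (by linarith : (0:ℝ) ≤ 2*δ) hδ.le,
            show 2*δ + δ = 3*δ from by ring]
  have hvolA : volume A ≤ volume KA + ENNReal.ofReal δ := by
    have h2 : volume KA0 ≤ volume KA := measure_mono
      ((Set.subset_insert _ _).trans (Set.subset_insert _ _))
    exact le_trans hKA0v.le (add_le_add_left h2 _)
  -- normalize
  set K₁ := (fun x : ℝ => x + -mA) '' KA with hK₁def
  set K₂ := (fun x : ℝ => x + -mB) '' KB with hK₂def
  have hK₁c : IsCompact K₁ := hKAc.image (continuous_add_right _)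
  have hK₂c : IsCompact K₂ := hKBc.image (continuous_add_right _)
  have hK₁sub : K₁ ⊆ Icc 0 L := by
    rintro _ ⟨x, hx, rfl⟩
    have h1 : mA ≤ x := csInf_le hKAc.bddBelow hx
    have h2 : x ≤ MA := le_csSup hKAc.bddAbove hx
    simp only [Set.mem_Icc, hLdef]
    constructor <;> linarith
  have hK₂sub : K₂ ⊆ Icc 0 L := by
    rintro _ ⟨x, hx, rfl⟩
    have h1 : mB ≤ x := hx.2.1
    have h2 : x ≤ mB + L := hx.2.2
    simp only [Set.mem_Icc]
    constructor <;> linarith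
  have h0K₁ : (0:ℝ) ∈ K₁ := ⟨mA, hmAmem, by ring⟩
  have hLK₁ : L ∈ K₁ := ⟨MA, hMAmem, by rw [hLdef]; ring⟩
  have hK₂ne : K₂.Nonempty := hKBne.image _
  have hvK₁ : volume K₁ = volume KA :=
    vol_image_add_real (-mA) hKAc.measurableSet.nullMeasurableSet
  have hvK₂ : volume K₂ = volume KB :=
    vol_image_add_real (-mB) hKBc.measurableSet.nullMeasurableSet
  have hcore := core (L := L) hK₁c hK₂c hK₁sub h0K₁ hLK₁ hK₂sub hK₂ne
  -- identify K₁ + K₂ with a translate of KA + KB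
  have hKsum : K₁ + K₂ = (fun x : ℝ => x + -(mA + mB)) '' (KA + KB) := by
    ext z
    constructor
    · intro hz
      rw [Set.mem_add] at hz
      obtain ⟨u, ⟨x, hx, rfl⟩, v, ⟨y, hy, rfl⟩, rfl⟩ := hz
      exact ⟨x + y, Set.add_mem_add hx hy, by ring⟩
    · rintro ⟨w, hw, rfl⟩
      rw [Set.mem_add] at hw
      obtain ⟨x, hx, y, hy, rfl⟩ := hw
      rw [Set.mem_add]
      exact ⟨x + -mA, ⟨x, hx, rfl⟩, y + -mB, ⟨y, hy, rfl⟩, by ring⟩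
  have hvsum : volume (K₁ + K₂) = volume (KA + KB) := by
    rw [hKsum]
    exact vol_image_add_real _ (hKAc.add hKBc).measurableSet.nullMeasurableSet
  have hsumAB : volume (KA + KB) ≤ volume (A + B) :=
    measure_mono (Set.add_subset_add hKAsub hKBsub)
  -- final chain
  have hofReal : ENNReal.ofReal (sA - iA) ≤ ENNReal.ofReal L + ENNReal.ofReal (4*δ) := by
    rw [← ENNReal.ofReal_add hLpos.le (by linarith)]
    apply ENNReal.ofReal_le_ofReal
    linarith
  have hminle : min (volume A + volume B) (ENNReal.ofReal (sA - iA))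
      ≤ min (volume K₁ + volume K₂) (ENNReal.ofReal L) + ENNReal.ofReal (4*δ) := by
    rw [← min_add_add_right]
    apply min_le_min
    · rw [hvK₁, hvK₂]
      calc volume A + volume B
          ≤ (volume KA + ENNReal.ofReal δ) + (volume KB + ENNReal.ofReal (3*δ)) :=
            add_le_add hvolA hvolB
        _ = volume KA + volume KB + (ENNReal.ofReal δ + ENNReal.ofReal (3*δ)) := by ring
        _ = volume KA + volume KB + ENNReal.ofReal (4*δ) := by
            rw [← ENNReal.ofReal_add hδ.le (by linarith : (0:ℝ) ≤ 3*δ),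
              show δ + 3*δ = 4*δ from by ring]
    · exact hofReal
  calc min (volume A + volume B) (ENNReal.ofReal (sA - iA)) + volume B
      ≤ (min (volume K₁ + volume K₂) (ENNReal.ofReal L) + ENNReal.ofReal (4*δ))
        + (volume KB + ENNReal.ofReal (3*δ)) := add_le_add hminle hvolB
    _ = (min (volume K₁ + volume K₂) (ENNReal.ofReal L) + volume K₂)
        + (ENNReal.ofReal (4*δ) + ENNReal.ofReal (3*δ)) := by rw [hvK₂]; ring
    _ ≤ volume (K₁ + K₂) + (ENNReal.ofReal (4*δ) + ENNReal.ofReal (3*δ)) :=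
        add_le_add_left hcore _
    _ = volume (KA + KB) + ENNReal.ofReal (7*δ) := by
        rw [hvsum, ← ENNReal.ofReal_add (by linarith : (0:ℝ) ≤ 4*δ) (by linarith : (0:ℝ) ≤ 3*δ),
          show 4*δ + 3*δ = 7*δ from by ring]
    _ ≤ volume (A + B) + ENNReal.ofReal (8*δ) :=
        add_le_add hsumAB (ENNReal.ofReal_le_ofReal (by linarith))

end OneDimFreiman

open OneDimFreiman in
/-- **Strengthened continuous Freiman-type inequality for distinct sets in one
dimension.** For nonempty bounded measurable `A, B ⊆ ℝ` with
`|co(A)| ≥ |co(B)|`, one has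
`|A + B| ≥ |A| + |B| + min{|co(A) \ A|, |B|}`. -/
theorem one_dim_distinct_sets (A B : Set ℝ)
    (hAne : A.Nonempty) (hBne : B.Nonempty)
    (hAbd : Bornology.IsBounded A) (hBbd : Bornology.IsBounded B)
    (hA : MeasurableSet A) (hB : MeasurableSet B)
    (hco : volume (convexHull ℝ B) ≤ volume (convexHull ℝ A)) :
    volume A + volume B + min (volume (convexHull ℝ A \ A)) (volume B) ≤
      volume (A + B) := by
  have hAbb := hAbd.bddBelow
  have hAba := hAbd.bddAbove
  have hvolA := volume_hull A hAne hAbd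
  have hvolB := volume_hull B hBne hBbd
  have hiA_le : sInf A ≤ sSup A := csInf_le_csSup hAne hAbb hAba
  have hlen : sSup B - sInf B ≤ sSup A - sInf A := by
    rw [hvolA, hvolB] at hco
    exact (ENNReal.ofReal_le_ofReal_iff (by linarith)).mp hco
  rcases eq_or_lt_of_le hiA_le with heq | hlt
  · -- degenerate case : `A` is a single point
    have hA1 : A = {sInf A} := by
      apply Set.Subset.antisymm
      · intro a ha
        have h1 := csInf_le hAbb ha
        have h2 := le_csSup hAba ha
        have ha' : a = sInf A := le_antisymm (by rw [heq]; exact h2) h1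
        simp [ha']
      · obtain ⟨a, ha⟩ := hAne
        have h1 := csInf_le hAbb ha
        have h2 := le_csSup hAba ha
        have ha' : a = sInf A := le_antisymm (by rw [heq]; exact h2) h1
        intro x hx
        simp only [Set.mem_singleton_iff] at hx
        subst hx
        rwa [← ha']
    rw [hA1, convexHull_singleton, Set.diff_self, measure_empty, Real.volume_singleton,
      min_eq_left zero_le, zero_add, add_zero]
    have himg : ({sInf A} : Set ℝ) + B = (fun b => b + sInf A) '' B := by
      ext x
      rw [Set.mem_add]
      constructor
      · rintro ⟨u, hu, b, hb, rfl⟩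
        rw [Set.mem_singleton_iff] at hu
        exact ⟨b, hb, by rw [hu]; ring⟩
      · rintro ⟨b, hb, rfl⟩
        exact ⟨sInf A, rfl, b, hb, by ring⟩
    rw [himg, vol_image_add_real (sInf A) hB.nullMeasurableSet]
  · -- main case
    have hkey : min (volume A + volume B) (ENNReal.ofReal (sSup A - sInf A)) + volume B
        ≤ volume (A + B) := by
      refine ENNReal.le_of_forall_pos_le_add fun ε hεpos hfin' => ?_
      have hεR : (0:ℝ) < (ε:ℝ) := hεpos
      set δ := min ((ε:ℝ)/8) ((sSup A - sInf A)/4) with hδdef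
      have hδpos : 0 < δ := lt_min (by positivity) (by linarith)
      have hδ4 : δ ≤ (sSup A - sInf A)/4 := min_le_right _ _
      have hδε : 8*δ ≤ (ε:ℝ) := by
        have := min_le_left ((ε:ℝ)/8) ((sSup A - sInf A)/4)
        rw [hδdef]
        linarith
      have hstep := approx_step A B hAne hBne hAbd hBbd hA hB hlen hlt hδpos hδ4
      refine hstep.trans (add_le_add_right ?_ _)
      calc ENNReal.ofReal (8*δ) ≤ ENNReal.ofReal (ε:ℝ) := ENNReal.ofReal_le_ofReal hδε
        _ = (ε : ℝ≥0∞) := ENNReal.ofReal_coe_nnreal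
    have hdiff : ENNReal.ofReal (sSup A - sInf A) = volume A + volume (convexHull ℝ A \ A) := by
      have h1 := measure_inter_add_diff (μ := volume) (convexHull ℝ A) hA
      rw [Set.inter_eq_self_of_subset_right (subset_convexHull ℝ A)] at h1
      rw [← hvolA]
      exact h1.symm
    rcases le_total (volume A + volume B) (ENNReal.ofReal (sSup A - sInf A)) with hmin | hmin
    · rw [min_eq_left hmin] at hkey
      calc volume A + volume B + min (volume (convexHull ℝ A \ A)) (volume B)
          ≤ volume A + volume B + volume B := add_le_add_right (min_le_right _ _) _
        _ ≤ volume (A + B) := hkey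
    · rw [min_eq_right hmin] at hkey
      calc volume A + volume B + min (volume (convexHull ℝ A \ A)) (volume B)
          ≤ volume A + volume B + volume (convexHull ℝ A \ A) :=
            add_le_add_right (min_le_left _ _) _
        _ = (volume A + volume (convexHull ℝ A \ A)) + volume B := by ring
        _ = ENNReal.ofReal (sSup A - sInf A) + volume B := by rw [hdiff]
        _ ≤ volume (A + B) := hkey
end

section
/- Let X, Y ⊆ ℝ^d be nonempty compact convex sets. Then there exist a vector v ∈ ℝ^d and an invertible affine transformation T : ℝ^d → ℝ^d such that, setting U := T(X) and V := v + T(Y), there are points p^1, …, p^d ∈ U ∪ V, scalars λ_1, …, λ_d ≥ 0, and affine hyperplanes H_1, …, H_d ⊆ ℝ^d satisfying: (1) for each i, if p^i ∈ U then p^i + λ_i e_i ∈ U, and if p^i ∈ V then p^i + λ_i e_i ∈ V; (2) for each i, U ∪ V ⊆ H_i + [0, λ_i]·e_i; (3) |⋂_{i=1}^d (H_i + [0, λ_i]·e_i)| = ∏_{i=1}^d λ_i. -/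
open MeasureTheory Pointwise

section helpers

variable {E : Type*} [AddCommGroup E] [Module ℝ E]

theorem chord_orient {X Z : Set E} {ζ : E}
    (h : (∃ x, x ∈ X ∧ x + ζ ∈ X) ∨ (∃ z, z ∈ Z ∧ z + ζ ∈ Z)) :
    ∃ (σ : ℝ) (p : E), (σ = 1 ∨ σ = -1) ∧ p ∈ X ∪ Z ∧
      (p ∈ X → p + σ • ζ ∈ X) ∧ (p ∈ Z → p + σ • ζ ∈ Z) := by
  have key : ∀ (X Z : Set E), (∃ x, x ∈ X ∧ x + ζ ∈ X) →
      ∃ (σ : ℝ) (p : E), (σ = 1 ∨ σ = -1) ∧ p ∈ X ∪ Z ∧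
        (p ∈ X → p + σ • ζ ∈ X) ∧ (p ∈ Z → p + σ • ζ ∈ Z) := by
    rintro X Z ⟨x, hx, hx'⟩
    by_cases hz : x ∈ Z
    · by_cases hz' : x + ζ ∈ Z
      · exact ⟨1, x, Or.inl rfl, Or.inl hx, fun _ => by simpa using hx',
          fun _ => by simpa using hz'⟩
      · refine ⟨-1, x + ζ, Or.inr rfl, Or.inl hx', fun _ => ?_, fun h => absurd h hz'⟩
        have h2 : x + ζ + (-1 : ℝ) • ζ = x := by rw [neg_one_smul]; abel
        rw [h2]; exact hx
    · exact ⟨1, x, Or.inl rfl, Or.inl hx, fun _ => by simpa using hx',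
        fun h => absurd h hz⟩
  rcases h with h | h
  · exact key X Z h
  · obtain ⟨σ, p, h1, h2, h3, h4⟩ := key Z X h
    exact ⟨σ, p, h1, Set.union_comm Z X ▸ h2, h4, h3⟩

end helpers

theorem slab_eq (d : ℕ) (i : Fin d) (c lam : ℝ) :
    {x : Fin d → ℝ | x i = c} +
      (fun s : ℝ => s • (Pi.single i 1 : Fin d → ℝ)) '' Set.Icc 0 lam =
      {x : Fin d → ℝ | x i ∈ Set.Icc c (c + lam)} := by
  ext x
  simp only [Set.mem_add, Set.mem_image, Set.mem_setOf_eq]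
  constructor
  · rintro ⟨h, hh, -, ⟨s, hs, rfl⟩, rfl⟩
    simp only [Pi.add_apply, Pi.smul_apply, Pi.single_eq_same, smul_eq_mul, mul_one, hh]
    exact ⟨by linarith [hs.1], by linarith [hs.2]⟩
  · intro hx
    refine ⟨x - (x i - c) • (Pi.single i 1 : Fin d → ℝ), ?_,
      (x i - c) • (Pi.single i 1 : Fin d → ℝ),
      ⟨x i - c, ⟨by linarith [hx.1], by linarith [hx.2]⟩, rfl⟩, by abel⟩
    simp [Pi.single_eq_same]

theorem det_update_eq {d : ℕ} (ζ : Fin d → Fin d → ℝ) (b : Module.Basis (Fin d) ℝ (Fin d → ℝ))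
    (hb : ∀ j, b j = ζ j) (i : Fin d) (z : Fin d → ℝ) :
    Matrix.detRowAlternating (Matrix.of (Function.update ζ i z)) =
      b.repr z i * Matrix.detRowAlternating (Matrix.of ζ) := by
  classical
  set f := (Matrix.detRowAlternating : (Fin d → ℝ) [⋀^Fin d]→ₗ[ℝ] ℝ) with hf
  have hz : z = ∑ j, b.repr z j • ζ j := by
    conv_lhs => rw [← b.sum_repr z]
    simp [hb]
  have h1 : f (Function.update ζ i z) = ∑ j, b.repr z j • f (Function.update ζ i (ζ j)) := by
    conv_lhs => rw [hz]
    rw [f.map_update_sum]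
    congr 1
    ext j
    exact f.map_update_smul ζ i _ _
  have h2 : ∀ j, j ≠ i → f (Function.update ζ i (ζ j)) = 0 := by
    intro j hj
    refine f.map_eq_zero_of_eq _ (?_ : _ = Function.update ζ i (ζ j) j) (Ne.symm hj)
    rw [Function.update_self, Function.update_of_ne hj]
  have h3 : f (Function.update ζ i (ζ i)) = f ζ := by rw [Function.update_eq_self]
  rw [show (Matrix.of (Function.update ζ i z)) = Function.update ζ i z from rfl] at *
  rw [h1, Finset.sum_eq_single i]
  · rw [h3]; rfl
  · intro j _ hj; rw [h2 j hj, smul_zero]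
  · intro h; exact absurd (Finset.mem_univ i) h

theorem exists_max_tuple {d : ℕ} (D : Set (Fin d → ℝ)) (hDne : D.Nonempty)
    (hDc : IsCompact D) (hDspan : Submodule.span ℝ D = ⊤) :
    ∃ ζ : Fin d → Fin d → ℝ, (∀ i, ζ i ∈ D) ∧
      Matrix.detRowAlternating (Matrix.of ζ) ≠ 0 ∧
      ∀ η : Fin d → Fin d → ℝ, (∀ i, η i ∈ D) →
        |Matrix.detRowAlternating (Matrix.of η)| ≤ |Matrix.detRowAlternating (Matrix.of ζ)| := by
  classical
  have hKc : IsCompact (Set.pi Set.univ (fun _ : Fin d => D)) := isCompact_univ_pi fun _ => hDc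
  have hKne : (Set.pi Set.univ (fun _ : Fin d => D)).Nonempty := ⟨fun _ => hDne.choose,
    fun i _ => hDne.choose_spec⟩
  have hFc : Continuous fun ζ : Fin d → Fin d → ℝ =>
      |Matrix.detRowAlternating (Matrix.of ζ)| := by
    have : Continuous fun ζ : Fin d → Fin d → ℝ => (Matrix.of ζ).det :=
      Continuous.matrix_det continuous_id
    exact this.abs
  obtain ⟨ζ, hζK, hζmax⟩ := hKc.exists_isMaxOn hKne hFc.continuousOn
  have hζD : ∀ i, ζ i ∈ D := fun i => hζK i (Set.mem_univ i)
  obtain ⟨s, hsD, hsspan, hsind⟩ := exists_linearIndependent ℝ D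
  have hsfin : s.Finite := hsind.finite
  have hsfintype : Fintype s := hsfin.fintype
  have hcard : Fintype.card s = d := by
    have h1 := finrank_span_eq_card hsind
    rw [Subtype.range_coe, hsspan, hDspan, finrank_top, Module.finrank_fin_fun] at h1
    exact h1.symm
  have e : s ≃ Fin d := Fintype.equivFinOfCardEq hcard
  set η : Fin d → Fin d → ℝ := fun i => ((e.symm i : s) : Fin d → ℝ) with hη
  have hηind : LinearIndependent ℝ η := hsind.comp e.symm e.symm.injective
  have hηspan : Submodule.span ℝ (Set.range η) = ⊤ := by
    have : Set.range η = s := by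
      ext x; constructor
      · rintro ⟨i, rfl⟩; exact (e.symm i).2
      · intro hx; exact ⟨e ⟨x, hx⟩, by simp [hη]⟩
    rw [this, hsspan, hDspan]
  have hηdet : Matrix.detRowAlternating (Matrix.of η) ≠ 0 := by
    have := (Module.Basis.is_basis_iff_det (Pi.basisFun ℝ (Fin d))).mp ⟨hηind, hηspan⟩
    rw [Pi.basisFun_det] at this
    exact IsUnit.ne_zero this
  have hηD : ∀ i, η i ∈ D := fun i => hsD (e.symm i).2
  refine ⟨ζ, hζD, ?_, fun η' hη' => hζmax (fun i _ => hη' i)⟩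
  have hle : |Matrix.detRowAlternating (Matrix.of η)| ≤
      |Matrix.detRowAlternating (Matrix.of ζ)| := hζmax (fun i _ => hηD i)
  intro h0
  rw [h0] at hle
  simp only [abs_zero] at hle
  exact hηdet (abs_eq_zero.mp (le_antisymm hle (abs_nonneg _)))

/-- **The positioning lemma.** Given nonempty compact convex `X, Y ⊆ ℝ^d`,
there are a translation `v` and an invertible affine map `T` such that, with
`U := T(X)` and `V := v + T(Y)`, there are points `pⁱ ∈ U ∪ V`, scalars
`λᵢ ≥ 0` and affine hyperplanes `Hᵢ` with: (1) if `pⁱ ∈ U` then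
`pⁱ + λᵢeᵢ ∈ U`, and if `pⁱ ∈ V` then `pⁱ + λᵢeᵢ ∈ V`; (2)
`U ∪ V ⊆ Hᵢ + [0, λᵢ]eᵢ`; (3) `|⋂ᵢ (Hᵢ + [0, λᵢ]eᵢ)| = ∏ᵢ λᵢ`. -/
theorem positioning_lemma (d : ℕ) (X Y : Set (Fin d → ℝ))
    (hXne : X.Nonempty) (hYne : Y.Nonempty)
    (hXc : IsCompact X) (hYc : IsCompact Y)
    (hXconv : Convex ℝ X) (hYconv : Convex ℝ Y) :
    ∃ (v : Fin d → ℝ) (T : (Fin d → ℝ) ≃ᵃ[ℝ] (Fin d → ℝ))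
      (p : Fin d → (Fin d → ℝ)) (lam : Fin d → ℝ) (H : Fin d → Set (Fin d → ℝ)),
      (∀ i, 0 ≤ lam i) ∧
      (∀ i, ∃ (f : (Fin d → ℝ) →ₗ[ℝ] ℝ) (c : ℝ), f ≠ 0 ∧ H i = {x | f x = c}) ∧
      (∀ i, p i ∈ (T '' X) ∪ (v +ᵥ (T '' Y))) ∧
      (∀ i, (p i ∈ T '' X → p i + lam i • (Pi.single i 1 : Fin d → ℝ) ∈ T '' X) ∧
            (p i ∈ v +ᵥ (T '' Y) →
              p i + lam i • (Pi.single i 1 : Fin d → ℝ) ∈ v +ᵥ (T '' Y))) ∧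
      (∀ i, (T '' X) ∪ (v +ᵥ (T '' Y)) ⊆
        H i + (fun s : ℝ => s • (Pi.single i 1 : Fin d → ℝ)) '' Set.Icc 0 (lam i)) ∧
      volume (⋂ i,
          (H i + (fun s : ℝ => s • (Pi.single i 1 : Fin d → ℝ)) '' Set.Icc 0 (lam i))) =
        ENNReal.ofReal (∏ i, lam i) := by
  classical
  obtain ⟨x₀, hx₀⟩ := hXne
  obtain ⟨y₀, hy₀⟩ := hYne
  -- difference sets
  set A : Set (Fin d → ℝ) := (fun p : (Fin d → ℝ) × (Fin d → ℝ) => p.1 - p.2) '' (X ×ˢ X) with hA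
  set B : Set (Fin d → ℝ) := (fun p : (Fin d → ℝ) × (Fin d → ℝ) => p.1 - p.2) '' (Y ×ˢ Y) with hB
  have hAc : IsCompact A := (hXc.prod hXc).image (continuous_fst.sub continuous_snd)
  have hBc : IsCompact B := (hYc.prod hYc).image (continuous_fst.sub continuous_snd)
  have hmemA : ∀ x ∈ X, ∀ x' ∈ X, x - x' ∈ A := fun x hx x' hx' => ⟨(x, x'), ⟨hx, hx'⟩, rfl⟩
  have hmemB : ∀ y ∈ Y, ∀ y' ∈ Y, y - y' ∈ B := fun y hy y' hy' => ⟨(y, y'), ⟨hy, hy'⟩, rfl⟩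
  have hAne : A.Nonempty := ⟨x₀ - x₀, hmemA x₀ hx₀ x₀ hx₀⟩
  set S : Submodule ℝ (Fin d → ℝ) := Submodule.span ℝ (A ∪ B) with hS
  obtain ⟨W, hW⟩ := Submodule.exists_isCompl S
  set w : Module.Basis (Fin (Module.finrank ℝ W)) ℝ W := Module.finBasis ℝ W with hw
  set D : Set (Fin d → ℝ) := A ∪ B ∪ Set.range (fun j => (w j : Fin d → ℝ)) with hD
  have hDne : D.Nonempty := ⟨hAne.choose, Or.inl (Or.inl hAne.choose_spec)⟩
  have hDc : IsCompact D := (hAc.union hBc).union (Set.finite_range _).isCompact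
  have hABS : A ∪ B ⊆ (S : Set (Fin d → ℝ)) := Submodule.subset_span
  have hDspan : Submodule.span ℝ D = ⊤ := by
    rw [hD, Submodule.span_union]
    have h1 : Submodule.span ℝ (Set.range fun j => (w j : Fin d → ℝ)) = W := by
      have h2 : (Set.range fun j => (w j : Fin d → ℝ)) = W.subtype '' Set.range w := by
        rw [← Set.range_comp]; rfl
      rw [h2, ← Submodule.map_span, Module.Basis.span_eq, Submodule.map_top, Submodule.range_subtype]
    rw [h1, ← hS]
    exact hW.sup_eq_top
  obtain ⟨ζ, hζD, hζdet, hζmax⟩ := exists_max_tuple D hDne hDc hDspan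
  obtain ⟨hζind, hζspan⟩ := (Module.Basis.is_basis_iff_det (Pi.basisFun ℝ (Fin d))).mpr
    (by rw [Pi.basisFun_det]; exact isUnit_iff_ne_zero.mpr hζdet)
  set b : Module.Basis (Fin d) ℝ (Fin d → ℝ) := Module.Basis.mk hζind hζspan.ge with hbdef
  have hbz : ∀ j, b j = ζ j := fun j => by rw [hbdef]; exact Module.Basis.mk_apply _ _ j
  set g : Fin d → ((Fin d → ℝ) →ₗ[ℝ] ℝ) := fun i => b.coord i with hg
  have hgζ : ∀ i j, g i (ζ j) = if i = j then 1 else 0 := by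
    intro i j
    rw [hg]
    simp only [Module.Basis.coord_apply, ← hbz j, Module.Basis.repr_self]
    rw [Finsupp.single_apply, eq_comm]
    simp [eq_comm]
  -- the dual bound
  have hdual : ∀ i, ∀ z ∈ A ∪ B, |g i z| ≤ 1 := by
    intro i z hz
    have h1 := det_update_eq ζ b hbz i z
    have h2 : ∀ j, Function.update ζ i z j ∈ D := by
      intro j
      rcases eq_or_ne j i with rfl | hj
      · rw [Function.update_self]; exact Or.inl hz
      · rw [Function.update_of_ne hj]; exact hζD j
    have h3 := hζmax _ h2
    rw [h1, abs_mul] at h3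
    have h4 : (0:ℝ) < |Matrix.detRowAlternating (Matrix.of ζ)| := abs_pos.mpr hζdet
    have h5 : |b.repr z i| * |Matrix.detRowAlternating (Matrix.of ζ)| ≤
        1 * |Matrix.detRowAlternating (Matrix.of ζ)| := by rwa [one_mul]
    have h6 := le_of_mul_le_mul_right h5 h4
    rw [hg]
    simpa [Module.Basis.coord_apply] using h6
  -- the set of coordinates with a chord
  set J : Set (Fin d) := {i | ζ i ∈ A ∪ B} with hJ
  have hnotJ : ∀ i, i ∉ J → ∃ j, (w j : Fin d → ℝ) = ζ i := by
    intro i hi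
    rcases hζD i with h | h
    · exact absurd h hi
    · exact h
  -- counting: coordinates outside J have functionals vanishing on S
  have hkill : ∀ i, i ∉ J → ∀ z ∈ A ∪ B, g i z = 0 := by
    intro i hi z hz
    have hfr : Module.finrank ℝ S + Module.finrank ℝ W = d := by
      have h := Submodule.finrank_add_eq_of_isCompl hW
      rwa [Module.finrank_fin_fun] at h
    -- injection from non-J coordinates into the basis of W
    set F : {i // i ∉ J} → Fin (Module.finrank ℝ W) := fun i => (hnotJ i i.2).choose with hF
    have hFinj : Function.Injective F := by
      intro i1 i2 h12
      have e1 := (hnotJ i1 i1.2).choose_spec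
      have e2 := (hnotJ i2 i2.2).choose_spec
      have : ζ (i1 : Fin d) = ζ (i2 : Fin d) := by
        rw [← e1, ← e2]
        exact congrArg (fun j => (w j : Fin d → ℝ)) h12
      have hinj : Function.Injective ζ := fun a b hab => by
        have := hζind.injective (show Matrix.of ζ a = Matrix.of ζ b from hab)
        exact this
      exact Subtype.ext (hinj this)
    have hcard1 : Fintype.card {i // i ∉ J} ≤ Module.finrank ℝ W :=
      (Fintype.card_le_of_injective F hFinj).trans (by rw [Fintype.card_fin])
    have hcard2 : Module.finrank ℝ S ≤ Fintype.card {i // i ∈ J} := by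
      have h := Fintype.card_subtype_compl (fun i : Fin d => i ∈ J)
      rw [Fintype.card_fin] at h
      omega
    -- the span of the J-coordinates is S
    set VJ : Submodule ℝ (Fin d → ℝ) := Submodule.span ℝ (ζ '' J) with hVJ
    have hVJle : VJ ≤ S := by
      rw [hVJ, Submodule.span_le]
      rintro _ ⟨j', hj', rfl⟩
      exact hABS hj'
    have hVJrank : Module.finrank ℝ VJ = Fintype.card {i // i ∈ J} := by
      have hind : LinearIndependent ℝ (fun i : {i // i ∈ J} => ζ (i : Fin d)) :=
        hζind.comp Subtype.val Subtype.val_injective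
      have h := finrank_span_eq_card hind
      rw [← Set.image_eq_range] at h
      exact h
    have hSVJ : VJ = S := Submodule.eq_of_le_of_finrank_le hVJle (by rw [hVJrank]; exact hcard2)
    have hker : VJ ≤ LinearMap.ker (g i) := by
      rw [hVJ, Submodule.span_le]
      rintro _ ⟨j', hj', rfl⟩
      have hij : i ≠ j' := fun h => hi (h ▸ hj')
      simp only [SetLike.mem_coe, LinearMap.mem_ker]
      rw [hgζ i j', if_neg hij]
    have hzS : z ∈ VJ := hSVJ ▸ (hABS hz)
    exact hker hzS
  -- widths
  have hgc : ∀ i, Continuous (g i) := fun i => (g i).continuous_of_finiteDimensional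
  set sX : Fin d → ℝ := fun i => sSup (g i '' X) with hsX
  set iX : Fin d → ℝ := fun i => sInf (g i '' X) with hiX
  set sY : Fin d → ℝ := fun i => sSup (g i '' Y) with hsY
  set iY : Fin d → ℝ := fun i => sInf (g i '' Y) with hiY
  have hXimc : ∀ i, IsCompact (g i '' X) := fun i => hXc.image (hgc i)
  have hYimc : ∀ i, IsCompact (g i '' Y) := fun i => hYc.image (hgc i)
  have hXimne : ∀ i, (g i '' X).Nonempty := fun i => ⟨g i x₀, ⟨x₀, hx₀, rfl⟩⟩
  have hYimne : ∀ i, (g i '' Y).Nonempty := fun i => ⟨g i y₀, ⟨y₀, hy₀, rfl⟩⟩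
  have hsXmem : ∀ i, ∃ x ∈ X, g i x = sX i := by
    intro i
    obtain ⟨x, hx, he⟩ := (hXimc i).sSup_mem (hXimne i)
    exact ⟨x, hx, he⟩
  have hiXmem : ∀ i, ∃ x ∈ X, g i x = iX i := by
    intro i
    obtain ⟨x, hx, he⟩ := (hXimc i).sInf_mem (hXimne i)
    exact ⟨x, hx, he⟩
  have hsYmem : ∀ i, ∃ y ∈ Y, g i y = sY i := by
    intro i
    obtain ⟨y, hy, he⟩ := (hYimc i).sSup_mem (hYimne i)
    exact ⟨y, hy, he⟩
  have hiYmem : ∀ i, ∃ y ∈ Y, g i y = iY i := by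
    intro i
    obtain ⟨y, hy, he⟩ := (hYimc i).sInf_mem (hYimne i)
    exact ⟨y, hy, he⟩
  have hleX : ∀ i, ∀ x ∈ X, iX i ≤ g i x ∧ g i x ≤ sX i := fun i x hx =>
    ⟨csInf_le (hXimc i).bddBelow ⟨x, hx, rfl⟩, le_csSup (hXimc i).bddAbove ⟨x, hx, rfl⟩⟩
  have hleY : ∀ i, ∀ y ∈ Y, iY i ≤ g i y ∧ g i y ≤ sY i := fun i y hy =>
    ⟨csInf_le (hYimc i).bddBelow ⟨y, hy, rfl⟩, le_csSup (hYimc i).bddAbove ⟨y, hy, rfl⟩⟩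
  have hwX : ∀ i, sX i - iX i ≤ 1 := by
    intro i
    obtain ⟨xa, hxa, hea⟩ := hsXmem i
    obtain ⟨xb, hxb, heb⟩ := hiXmem i
    have hz : xa - xb ∈ A := hmemA xa hxa xb hxb
    have h := hdual i _ (Or.inl hz)
    rw [map_sub, hea, heb] at h
    exact (abs_le.mp h).2
  have hwY : ∀ i, sY i - iY i ≤ 1 := by
    intro i
    obtain ⟨ya, hya, hea⟩ := hsYmem i
    obtain ⟨yb, hyb, heb⟩ := hiYmem i
    have hz : ya - yb ∈ B := hmemB ya hya yb hyb
    have h := hdual i _ (Or.inr hz)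
    rw [map_sub, hea, heb] at h
    exact (abs_le.mp h).2
  have hwX0 : ∀ i, i ∉ J → sX i = iX i := by
    intro i hi
    obtain ⟨xa, hxa, hea⟩ := hsXmem i
    obtain ⟨xb, hxb, heb⟩ := hiXmem i
    have h := hkill i hi _ (Or.inl (hmemA xa hxa xb hxb))
    rw [_root_.map_sub] at h
    rw [← hea, ← heb]
    linarith
  have hwY0 : ∀ i, i ∉ J → sY i = iY i := by
    intro i hi
    obtain ⟨ya, hya, hea⟩ := hsYmem i
    obtain ⟨yb, hyb, heb⟩ := hiYmem i
    have h := hkill i hi _ (Or.inr (hmemB ya hya yb hyb))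
    rw [_root_.map_sub] at h
    rw [← hea, ← heb]
    linarith
  -- lambda
  set lam : Fin d → ℝ := fun i => if i ∈ J then (1:ℝ) else 0 with hlam
  -- centering translation
  set dsh : Fin d → ℝ := fun i => (sX i + iX i)/2 - (sY i + iY i)/2 with hdsh
  set τ : Fin d → ℝ := ∑ j, dsh j • ζ j with hτ
  have hgτ : ∀ i, g i τ = dsh i := by
    intro i
    rw [hτ, map_sum]
    rw [Finset.sum_eq_single i]
    · rw [_root_.map_smul, hgζ, if_pos rfl, smul_eq_mul, mul_one]
    · intro j _ hj
      rw [_root_.map_smul, hgζ, if_neg (Ne.symm hj), smul_eq_mul, mul_zero]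
    · intro h; exact absurd (Finset.mem_univ i) h
  set Z : Set (Fin d → ℝ) := (fun y => τ + y) '' Y with hZ
  -- chords
  have hchord : ∀ i, i ∈ J →
      (∃ x, x ∈ X ∧ x + ζ i ∈ X) ∨ (∃ z, z ∈ Z ∧ z + ζ i ∈ Z) := by
    intro i hi
    rcases hi with h | h
    · obtain ⟨⟨xa, xb⟩, ⟨hxa, hxb⟩, heq⟩ := h
      refine Or.inl ⟨xb, hxb, ?_⟩
      have : xb + ζ i = xa := by rw [← heq]; simp
      rw [this]; exact hxa
    · obtain ⟨⟨ya, yb⟩, ⟨hya, hyb⟩, heq⟩ := h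
      refine Or.inr ⟨τ + yb, ⟨yb, hyb, rfl⟩, ?_⟩
      have : τ + yb + ζ i = τ + ya := by
        rw [← heq]
        show τ + yb + (ya - yb) = τ + ya
        abel
      rw [this]; exact ⟨ya, hya, rfl⟩
  -- per-coordinate choice of orientation and point
  have hsp : ∀ i, ∃ sp : ℝ × (Fin d → ℝ), (sp.1 = 1 ∨ sp.1 = -1) ∧ sp.2 ∈ X ∪ Z ∧
      (sp.2 ∈ X → sp.2 + lam i • (sp.1 • ζ i) ∈ X) ∧
      (sp.2 ∈ Z → sp.2 + lam i • (sp.1 • ζ i) ∈ Z) := by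
    intro i
    by_cases hi : i ∈ J
    · obtain ⟨σ, p, h1, h2, h3, h4⟩ := chord_orient (hchord i hi)
      refine ⟨(σ, p), h1, h2, ?_, ?_⟩
      · simp only [hlam]; simp only [if_pos hi, one_smul]; exact h3
      · simp only [hlam]; simp only [if_pos hi, one_smul]; exact h4
    · refine ⟨(1, x₀), Or.inl rfl, Or.inl hx₀, ?_, ?_⟩
      · simp only [hlam]; simp only [if_neg hi, zero_smul, add_zero]; exact fun h => h
      · simp only [hlam]; simp only [if_neg hi, zero_smul, add_zero]; exact fun h => h
  set σ : Fin d → ℝ := fun i => (hsp i).choose.1 with hσ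
  set porig : Fin d → (Fin d → ℝ) := fun i => (hsp i).choose.2 with hporig
  have hσ1 : ∀ i, σ i = 1 ∨ σ i = -1 := fun i => (hsp i).choose_spec.1
  have hσ2 : ∀ i, σ i * σ i = 1 := by
    intro i
    rcases hσ1 i with h | h <;> rw [h] <;> norm_num
  have hσne : ∀ i, σ i ≠ 0 := by
    intro i
    rcases hσ1 i with h | h <;> rw [h] <;> norm_num
  have hpXZ : ∀ i, porig i ∈ X ∪ Z := fun i => (hsp i).choose_spec.2.1
  have hpX : ∀ i, porig i ∈ X → porig i + lam i • (σ i • ζ i) ∈ X :=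
    fun i => (hsp i).choose_spec.2.2.1
  have hpZ : ∀ i, porig i ∈ Z → porig i + lam i • (σ i • ζ i) ∈ Z :=
    fun i => (hsp i).choose_spec.2.2.2
  -- the flipped basis
  set ζ' : Fin d → (Fin d → ℝ) := fun i => σ i • ζ i with hζ'
  have hζ'det : Matrix.detRowAlternating (Matrix.of ζ') ≠ 0 := by
    have h1 : Matrix.of ζ' = Matrix.of (fun i j => σ i * (Matrix.of ζ) i j) := rfl
    have h2 : (Matrix.of ζ').det = (∏ i, σ i) * (Matrix.of ζ).det := by
      rw [h1]; exact Matrix.det_mul_column σ _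
    have h3 : (∏ i, σ i) ≠ 0 := Finset.prod_ne_zero_iff.mpr (fun i _ => hσne i)
    show (Matrix.of ζ').det ≠ 0
    rw [h2]
    exact mul_ne_zero h3 hζdet
  obtain ⟨hζ'ind, hζ'span⟩ := (Module.Basis.is_basis_iff_det (Pi.basisFun ℝ (Fin d))).mpr
    (by rw [Pi.basisFun_det]; exact isUnit_iff_ne_zero.mpr hζ'det)
  set b' : Module.Basis (Fin d) ℝ (Fin d → ℝ) := Module.Basis.mk hζ'ind hζ'span.ge with hb'def
  have hb'z : ∀ j, b' j = ζ' j := fun j => by rw [hb'def]; exact Module.Basis.mk_apply _ _ j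
  have hg' : ∀ i x, b'.coord i x = σ i * g i x := by
    intro i
    have hmaps : b'.coord i = σ i • g i := by
      apply b'.ext
      intro j
      have h1 : b'.coord i (b' j) = if i = j then 1 else 0 := by
        rw [Module.Basis.coord_apply, Module.Basis.repr_self, Finsupp.single_apply]
        rcases eq_or_ne i j with rfl | hij
        · simp
        · simp [hij, Ne.symm hij]
      rw [h1, hb'z j, hζ']
      show (if i = j then 1 else 0) = (σ i • g i) (σ j • ζ j)
      rw [LinearMap.smul_apply, _root_.map_smul, hgζ i j]
      rcases eq_or_ne i j with rfl | hij
      · rw [if_pos rfl, smul_eq_mul, smul_eq_mul, mul_one, hσ2]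
      · rw [if_neg hij, smul_eq_mul, smul_eq_mul, mul_zero, mul_zero]
    intro x
    rw [hmaps, LinearMap.smul_apply, smul_eq_mul]
  have hTco : ∀ x i, b'.equivFun x i = b'.coord i x := by
    intro x i
    rw [Module.Basis.equivFun_apply, Module.Basis.coord_apply]
  have hTζ' : ∀ i, b'.equivFun (ζ' i) = Pi.single i 1 := by
    intro i
    funext j
    rw [hTco, ← hb'z i, Module.Basis.coord_apply, Module.Basis.repr_self]
    rw [Finsupp.single_apply, Pi.single_apply]
    rcases eq_or_ne i j with rfl | hij
    · simp
    · simp [hij, Ne.symm hij]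
  -- final data
  set v : Fin d → ℝ := b'.equivFun τ with hv
  set c : Fin d → ℝ := fun i => σ i * ((sX i + iX i)/2) - lam i / 2 with hc
  have hUZ : (v +ᵥ (⇑b'.equivFun '' Y)) = ⇑b'.equivFun '' Z := by
    ext q
    constructor
    · rintro ⟨u, ⟨y, hy, rfl⟩, rfl⟩
      refine ⟨τ + y, ⟨y, hy, rfl⟩, ?_⟩
      show b'.equivFun (τ + y) = v + b'.equivFun y
      rw [hv, ← _root_.map_add]
    · rintro ⟨z, ⟨y, hy, rfl⟩, rfl⟩
      refine ⟨b'.equivFun y, ⟨y, hy, rfl⟩, ?_⟩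
      show v + b'.equivFun y = b'.equivFun (τ + y)
      rw [hv, ← _root_.map_add]
  refine ⟨v, b'.equivFun.toAffineEquiv, fun i => b'.equivFun (porig i), lam,
    fun i => {x | x i = c i}, ?_, ?_, ?_, ?_, ?_, ?_⟩
  · intro i
    simp only [hlam]
    by_cases hi : i ∈ J
    · rw [if_pos hi]; norm_num
    · rw [if_neg hi]
  · intro i
    refine ⟨LinearMap.proj i, c i, ?_, rfl⟩
    intro h
    have h1 := DFunLike.congr_fun h (Pi.single i 1 : Fin d → ℝ)
    simp only [LinearMap.proj_apply, Pi.single_eq_same, LinearMap.zero_apply] at h1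
    exact one_ne_zero h1
  · intro i
    simp only [LinearEquiv.coe_toAffineEquiv]
    rcases hpXZ i with h | h
    · exact Or.inl ⟨porig i, h, rfl⟩
    · exact Or.inr (hUZ ▸ ⟨porig i, h, rfl⟩)
  · intro i
    simp only [LinearEquiv.coe_toAffineEquiv]
    have hkey : b'.equivFun (porig i) + lam i • (Pi.single i 1 : Fin d → ℝ) =
        b'.equivFun (porig i + lam i • ζ' i) := by
      rw [_root_.map_add, _root_.map_smul, hTζ' i]
    constructor
    · intro hmem
      have hp : porig i ∈ X := by
        rwa [(b'.equivFun.injective).mem_set_image] at hmem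
      rw [hkey]
      exact ⟨_, hpX i hp, rfl⟩
    · intro hmem
      rw [hUZ] at hmem
      have hp : porig i ∈ Z := by
        rwa [(b'.equivFun.injective).mem_set_image] at hmem
      rw [hUZ, hkey]
      exact ⟨_, hpZ i hp, rfl⟩
  · intro i
    simp only [LinearEquiv.coe_toAffineEquiv]
    rw [slab_eq]
    rintro q (⟨x, hx, rfl⟩ | hq)
    · have hval : b'.equivFun x i = σ i * g i x := by rw [hTco, hg']
      simp only [Set.mem_setOf_eq, hval, Set.mem_Icc]
      have h1 := (hleX i x hx).1
      have h2 := (hleX i x hx).2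
      simp only [hc]
      by_cases hi : i ∈ J
      · have h3 := hwX i
        simp only [hlam]
        simp only [if_pos hi]
        rcases hσ1 i with h | h <;> rw [h] <;> constructor <;> linarith
      · have h4 := hwX0 i hi
        simp only [hlam]
        simp only [if_neg hi]
        have h5 : g i x = sX i := by
          have h6 := hkill i hi
          obtain ⟨xa, hxa, hea⟩ := hsXmem i
          have := h6 _ (Or.inl (hmemA x hx xa hxa))
          rw [_root_.map_sub] at this
          linarith [hea]
        rcases hσ1 i with h | h <;> rw [h] <;> constructor <;> linarith
    · rw [hUZ] at hq
      obtain ⟨z, ⟨y, hy, rfl⟩, rfl⟩ := hq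
      have hval : b'.equivFun (τ + y) i = σ i * (dsh i + g i y) := by
        rw [hTco, hg', _root_.map_add, hgτ]
      simp only [Set.mem_setOf_eq, hval, Set.mem_Icc]
      have h1 := (hleY i y hy).1
      have h2 := (hleY i y hy).2
      simp only [hc, hdsh]
      by_cases hi : i ∈ J
      · have h3 := hwY i
        simp only [hlam]
        simp only [if_pos hi]
        rcases hσ1 i with h | h <;> rw [h] <;> constructor <;> linarith
      · have h4 := hwY0 i hi
        simp only [hlam]
        simp only [if_neg hi]
        have h5 : g i y = sY i := by
          have h6 := hkill i hi
          obtain ⟨ya, hya, hea⟩ := hsYmem i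
          have := h6 _ (Or.inr (hmemB y hy ya hya))
          rw [_root_.map_sub] at this
          linarith [hea]
        rcases hσ1 i with h | h <;> rw [h] <;> constructor <;> linarith
  · have hbox : (⋂ i, ({x : Fin d → ℝ | x i = c i} +
        (fun s : ℝ => s • (Pi.single i 1 : Fin d → ℝ)) '' Set.Icc 0 (lam i))) =
        Set.pi Set.univ (fun i => Set.Icc (c i) (c i + lam i)) := by
      ext q
      simp only [Set.mem_iInter, Set.mem_pi, Set.mem_univ, forall_true_left]
      constructor
      · intro h i
        have := h i
        rw [slab_eq] at this
        exact this
      · intro h i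
        rw [slab_eq]
        exact h i
    rw [hbox, volume_pi_pi]
    have : ∀ i, volume (Set.Icc (c i) (c i + lam i)) = ENNReal.ofReal (lam i) := by
      intro i
      rw [Real.volume_Icc, add_sub_cancel_left]
    rw [Finset.prod_congr rfl (fun i _ => this i)]
    rw [← ENNReal.ofReal_prod_of_nonneg]
    intro i _
    simp only [hlam]
    by_cases hi : i ∈ J
    · rw [if_pos hi]; norm_num
    · rw [if_neg hi]
end

section
/- Let d ≥ 1, t ∈ (0, 1/2], let A = [0, 1]^d be the unit cube, and let v ∈ ℝ^d be a vector whose first coordinate satisfies v_1 ≥ 1/(1−t) and whose remaining coordinates are nonnegative. Set B := A ∪ {v}. Then tA + (1−t)B = [0,1]^d ∪ ((1−t)v + [0, t]^d), and consequently |tA + (1−t)B| = (1 + t^d)·|A|, i.e. δ_t(A, B) = t^d. -/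
open MeasureTheory Pointwise
lemma smul_Icc_pi {d : ℕ} {r : ℝ} (hr : 0 < r) (a b : Fin d → ℝ) :
    r • Set.Icc a b = Set.Icc (r • a) (r • b) := by
  ext x
  simp only [Set.mem_smul_set, Set.mem_Icc, Pi.le_def, Pi.smul_apply, smul_eq_mul]
  constructor
  · rintro ⟨y, ⟨h1, h2⟩, rfl⟩
    exact ⟨fun i => mul_le_mul_of_nonneg_left (h1 i) hr.le,
      fun i => mul_le_mul_of_nonneg_left (h2 i) hr.le⟩
  · rintro ⟨h1, h2⟩
    refine ⟨r⁻¹ • x, ⟨fun i => ?_, fun i => ?_⟩, ?_⟩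
    · simpa [Pi.smul_apply, smul_eq_mul] using (le_inv_mul_iff₀ hr).2 (by simpa using h1 i)
    · simpa [Pi.smul_apply, smul_eq_mul] using (inv_mul_le_iff₀ hr).2 (by simpa using h2 i)
    · funext i; simp [Pi.smul_apply, smul_eq_mul, mul_inv_cancel_left₀ hr.ne']

/-- **Sharpness example.** For `d ≥ 1`, `t ∈ (0, 1/2]`, `A = [0,1]^d` the unit
cube, and `v ∈ ℝ^d` with nonnegative coordinates and first coordinate at least
`1/(1-t)`, setting `B := A ∪ {v}` gives
`tA + (1-t)B = [0,1]^d ∪ ((1-t)v + [0,t]^d)`, and consequently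
`|tA + (1-t)B| = (1 + t^d)|A|`, i.e. `δ_t(A, B) = t^d`. -/
theorem sharpness_example (d : ℕ) (hd : 1 ≤ d) (t : ℝ) (ht0 : 0 < t)
    (ht2 : t ≤ 1 / 2) (v : Fin d → ℝ) (hv0 : ∀ i, 0 ≤ v i)
    (hv1 : 1 / (1 - t) ≤ v ⟨0, hd⟩) :
    t • Set.Icc (0 : Fin d → ℝ) 1 +
        (1 - t) • (Set.Icc (0 : Fin d → ℝ) 1 ∪ {v}) =
      Set.Icc (0 : Fin d → ℝ) 1 ∪
        ((1 - t) • v +ᵥ Set.Icc (0 : Fin d → ℝ) (fun _ => t)) ∧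
    volume (t • Set.Icc (0 : Fin d → ℝ) 1 +
        (1 - t) • (Set.Icc (0 : Fin d → ℝ) 1 ∪ {v})) =
      ENNReal.ofReal (1 + t ^ d) * volume (Set.Icc (0 : Fin d → ℝ) 1) := by
  have ht1 : 0 < 1 - t := by linarith
  have hcube : t • Set.Icc (0 : Fin d → ℝ) 1 + (1 - t) • Set.Icc (0 : Fin d → ℝ) 1
      = Set.Icc (0 : Fin d → ℝ) 1 := by
    rw [← (convex_Icc (0 : Fin d → ℝ) 1).add_smul ht0.le ht1.le]
    norm_num
  have htIcc : t • Set.Icc (0 : Fin d → ℝ) 1 = Set.Icc 0 (fun _ => t) := by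
    have h01 : t • (0 : Fin d → ℝ) = 0 := smul_zero t
    have h11 : t • (1 : Fin d → ℝ) = fun _ => t := by funext i; simp
    rw [smul_Icc_pi ht0, h01, h11]
  have hsing : t • Set.Icc (0 : Fin d → ℝ) 1 + (1 - t) • ({v} : Set (Fin d → ℝ))
      = (1 - t) • v +ᵥ Set.Icc (0 : Fin d → ℝ) (fun _ => t) := by
    rw [htIcc, Set.smul_set_singleton]
    ext x
    simp only [Set.add_singleton, Set.mem_image, Set.mem_vadd_set, vadd_eq_add]
    constructor
    · rintro ⟨y, hy, rfl⟩; exact ⟨y, hy, add_comm _ y⟩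
    · rintro ⟨y, hy, rfl⟩; exact ⟨y, hy, add_comm y _⟩
  have key : t • Set.Icc (0 : Fin d → ℝ) 1 +
      (1 - t) • (Set.Icc (0 : Fin d → ℝ) 1 ∪ {v}) =
      Set.Icc (0 : Fin d → ℝ) 1 ∪
        ((1 - t) • v +ᵥ Set.Icc (0 : Fin d → ℝ) (fun _ => t)) := by
    rw [Set.smul_set_union, Set.add_union, hcube, hsing]
  refine ⟨key, ?_⟩
  rw [key]
  -- the hyperplane {x | x 0 = 1} has measure zero
  set i0 : Fin d := ⟨0, hd⟩
  have hH : volume {x : Fin d → ℝ | x i0 = 1} = 0 := by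
    have : {x : Fin d → ℝ | x i0 = 1} =
        Set.pi Set.univ (Function.update (fun _ => (Set.univ : Set ℝ)) i0 {1}) := by
      ext x
      simp only [Set.mem_setOf_eq, Set.mem_pi, Set.mem_univ, true_implies]
      constructor
      · intro h j
        rcases eq_or_ne j i0 with rfl | hj
        · simp [h]
        · simp [Function.update_of_ne hj]
      · intro h
        have := h i0
        simpa using this
    rw [this, volume_pi_pi]
    exact Finset.prod_eq_zero (Finset.mem_univ i0) (by simp)
  have hdisj : AEDisjoint volume (Set.Icc (0 : Fin d → ℝ) 1)
      ((1 - t) • v +ᵥ Set.Icc (0 : Fin d → ℝ) (fun _ => t)) := by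
    refine measure_mono_null ?_ hH
    rintro x ⟨hx1, hx2⟩
    rcases hx2 with ⟨y, hy, rfl⟩
    have h1 : ((1 - t) • v +ᵥ y) i0 ≤ 1 := hx1.2 i0
    have h2 : (1 : ℝ) ≤ (1 - t) * v i0 := by
      have := mul_le_mul_of_nonneg_left hv1 ht1.le
      calc (1:ℝ) = (1 - t) * (1 / (1 - t)) := by field_simp
        _ ≤ (1 - t) * v i0 := this
    have h3 : (1 - t) * v i0 ≤ ((1 - t) • v +ᵥ y) i0 := by
      have : (0:ℝ) ≤ y i0 := hy.1 i0
      simp only [Pi.vadd_apply, vadd_eq_add, Pi.add_apply, Pi.smul_apply, smul_eq_mul]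
      linarith
    simp only [Set.mem_setOf_eq]
    linarith [h1, le_trans h2 h3]
  have hmeas : NullMeasurableSet ((1 - t) • v +ᵥ Set.Icc (0 : Fin d → ℝ) (fun _ => t))
      volume := (measurableSet_Icc.const_vadd _).nullMeasurableSet
  rw [measure_union₀ hmeas hdisj, measure_vadd]
  have hv1' : volume (Set.Icc (0 : Fin d → ℝ) 1) = 1 := by
    rw [Real.volume_Icc_pi]; simp
  have hv2 : volume (Set.Icc (0 : Fin d → ℝ) (fun _ => t)) = ENNReal.ofReal (t ^ d) := by
    rw [Real.volume_Icc_pi]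
    simp [Finset.prod_const, ← ENNReal.ofReal_pow ht0.le]
  rw [hv1', hv2, ENNReal.ofReal_add (by norm_num) (pow_nonneg ht0.le d)]
  simp
end

section
/- Let d ≥ 1 and let A ⊆ ℝ^d be a nonempty set. Suppose that for each coordinate direction i ∈ {1, …, d} there exist a point a^i ∈ ℝ^d and a set F_i ⊆ A with F_i ⊆ a^i + ℝ·e_i (i.e. F_i lies on a line in direction e_i) whose one-dimensional Lebesgue outer measure along that line is at least m_i ≥ 0. Then the d-fold iterated sumset satisfies |d·A| ≥ ∏_{i=1}^d m_i, where |·| denotes Lebesgue outer measure on ℝ^d. -/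
open MeasureTheory Pointwise

/-- The `k`-fold iterated Minkowski sumset `k·A = A + ⋯ + A` (`k` summands),
defined for `k ≥ 1` (and as `∅` for `k = 0`). -/
def kSum {α : Type*} [Add α] : ℕ → Set α → Set α
  | 0, _ => ∅
  | 1, A => A
  | n + 2, A => kSum (n + 1) A + A

lemma sum_mem_kSum {α : Type*} [AddCommMonoid α] (A : Set α) :
    ∀ n (f : Fin (n + 1) → α), (∀ i, f i ∈ A) → (∑ i, f i) ∈ kSum (n + 1) A := by
  intro n
  induction n with
  | zero => intro f hf; simpa [kSum] using hf 0
  | succ n ih =>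
      intro f hf
      rw [Fin.sum_univ_castSucc]
      exact Set.add_mem_add (ih _ fun i => hf _) (hf _)

/-- **Fiber-product lower bound for iterated sumsets.** Let `A ⊆ ℝ^d` be
nonempty, `d ≥ 1`, and suppose for each coordinate direction `i` the set `A`
contains a subset of the line `aⁱ + ℝeᵢ` whose one-dimensional outer measure
(i.e. the outer measure of its parameter set) is at least `mᵢ ≥ 0`. Then
`|d·A| ≥ ∏ᵢ mᵢ`. -/
theorem fiber_product_lower_bound (d : ℕ) (hd : 1 ≤ d)
    (A : Set (Fin d → ℝ)) (hAne : A.Nonempty) (a : Fin d → (Fin d → ℝ))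
    (m : Fin d → ℝ) (hm : ∀ i, 0 ≤ m i)
    (hfib : ∀ i, ∃ G : Set ℝ, ENNReal.ofReal (m i) ≤ volume G ∧
      (fun s : ℝ => a i + s • (Pi.single i 1 : Fin d → ℝ)) '' G ⊆ A) :
    ENNReal.ofReal (∏ i, m i) ≤ volume (kSum d A) := by
  choose G hG hGA using hfib
  set b : Fin d → ℝ := ∑ i, a i with hb
  -- the translated box sits inside the sumset
  have hsub : (b +ᵥ Set.pi Set.univ G) ⊆ kSum d A := by
    rintro _ ⟨x, hx, rfl⟩
    obtain ⟨n, rfl⟩ : ∃ n, d = n + 1 := ⟨d - 1, (Nat.succ_pred_eq_of_pos hd).symm⟩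
    have key : b +ᵥ x = ∑ i, (a i + x i • (Pi.single i 1 : Fin (n+1) → ℝ)) := by
      rw [Finset.sum_add_distrib]
      have : ∀ i : Fin (n+1), x i • (Pi.single i 1 : Fin (n+1) → ℝ) =
          Pi.single i (x i) := by
        intro i; ext j; by_cases h : j = i <;> simp [Pi.single_apply, h]
      simp only [this]
      rw [Finset.univ_sum_single]
      rfl
    show b +ᵥ x ∈ _
    rw [key]
    exact sum_mem_kSum A n _ fun i => hGA i ⟨x i, hx i (Set.mem_univ i), rfl⟩
  calc ENNReal.ofReal (∏ i, m i) = ∏ i, ENNReal.ofReal (m i) := by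
        rw [ENNReal.ofReal_prod_of_nonneg fun i _ => hm i]
    _ ≤ ∏ i, volume (G i) := Finset.prod_le_prod' fun i _ => hG i
    _ = volume (Set.pi Set.univ G) := (MeasureTheory.volume_pi_pi G).symm
    _ = volume (b +ᵥ Set.pi Set.univ G) := (measure_vadd volume b _).symm
    _ ≤ volume (kSum d A) := measure_mono hsub
end
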